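/- arXiv:1811.07856 — 6 statements merged into one kernel-verified Lean document; each statement's English description precedes it below -/
import Mathlib

section
/- A subset F of E ∪ A in a mixed graph G = (V, E ∪ A) is a mixed edge cover (i.e., every vertex v ∈ V is reachable by a directed path, possibly of length 0, in F ∩ A from an endpoint of some edge in F ∩ E) if and only if F ∩ A contains a branching B whose root set R(B) is contained in the set of vertices covered by F ∩ E. -/
variable {V : Type*} [Fintype V] [DecidableEq V]

/-- Number of elements of `FE` covering `v` (an edge covers both its endpoints). -/
def edgeCoverCount (FE : Finset (Sym2 V)) (v : V) : ℕ :=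
  (FE.filter (fun e => v ∈ e)).card

/-- Number of arcs of `FA` with head `v`. -/
def arcCoverCount (FA : Finset (V × V)) (v : V) : ℕ :=
  (FA.filter (fun a => a.2 = v)).card

/-- The multiset of undirected edges underlying the edge set `FE` and arc set `FA`. -/
def underlyingEdges (FE : Finset (Sym2 V)) (FA : Finset (V × V)) : Multiset (Sym2 V) :=
  FE.val + FA.val.map (fun a => s(a.1, a.2))

/-- A multiset of undirected edges is acyclic (a forest) iff every nonempty sub-multiset
touches strictly more vertices than its number of edges. -/
def AcyclicEdgeMultiset (M : Multiset (Sym2 V)) : Prop :=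
  ∀ S : Multiset (Sym2 V), S ≤ M → S ≠ 0 →
    Multiset.card S < (Finset.univ.filter (fun v : V => ∃ e ∈ S.toFinset, v ∈ e)).card

/-- A matching forest: acyclic underlying undirected graph and every vertex covered at most
once (endpoints of edges and heads of arcs count as covered). -/
def IsMatchingForest (FE : Finset (Sym2 V)) (FA : Finset (V × V)) : Prop :=
  AcyclicEdgeMultiset (underlyingEdges FE FA) ∧
    ∀ v : V, edgeCoverCount FE v + arcCoverCount FA v ≤ 1

/-- Reachability by a directed path (possibly of length 0) using arcs of `B`. -/
def arcReach (B : Finset (V × V)) : V → V → Prop :=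
  Relation.ReflTransGen (fun u v => (u, v) ∈ B)

/-- A branching: each vertex has in-degree at most one and there is no directed cycle. -/
def IsBranching (B : Finset (V × V)) : Prop :=
  (∀ v : V, arcCoverCount B v ≤ 1) ∧ ∀ a ∈ B, ¬ arcReach B a.2 a.1

/-- The root set of a branching: vertices with in-degree zero. -/
def rootSet (B : Finset (V × V)) : Finset V :=
  Finset.univ.filter (fun v => arcCoverCount B v = 0)

/-- A matching: every vertex is covered by at most one edge. -/
def IsMatching (FE : Finset (Sym2 V)) : Prop := ∀ v : V, edgeCoverCount FE v ≤ 1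

/-- The set of vertices covered by some edge of `FE`. -/
def edgeCovered (FE : Finset (Sym2 V)) : Finset V :=
  Finset.univ.filter (fun v => 0 < edgeCoverCount FE v)

/-- A mixed edge cover: every vertex is reachable by a directed path (possibly trivial)
in the arc part from an endpoint of some edge of the edge part. -/
def IsMixedEdgeCover (FE : Finset (Sym2 V)) (FA : Finset (V × V)) : Prop :=
  ∀ v : V, ∃ u : V, (∃ e ∈ FE, u ∈ e) ∧ arcReach FA u v

/-- A mixed covering forest: acyclic underlying undirected graph and every vertex covered
at least once. -/
def IsMixedCoveringForest (FE : Finset (Sym2 V)) (FA : Finset (V × V)) : Prop :=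
  AcyclicEdgeMultiset (underlyingEdges FE FA) ∧
    ∀ v : V, 1 ≤ edgeCoverCount FE v + arcCoverCount FA v

/-- The mix-size ⟨F⟩ = |F ∩ E| + |F ∩ A| / 2. -/
def mixSize (FE : Finset (Sym2 V)) (FA : Finset (V × V)) : ℚ :=
  (FE.card : ℚ) + (FA.card : ℚ) / 2


/-- Auxiliary: vertices reachable from an edge-covered vertex in at most `n` arc steps. -/
def reachSet (FE : Finset (Sym2 V)) (FA : Finset (V × V)) : ℕ → Finset V
  | 0 => edgeCovered FE
  | n+1 => reachSet FE FA n ∪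
      Finset.univ.filter (fun v => ∃ u ∈ reachSet FE FA n, (u, v) ∈ FA)

theorem mixed_edge_cover_characterization
    (E : Finset (Sym2 V)) (A : Finset (V × V))
    (hE : ∀ e ∈ E, ¬ e.IsDiag) (hA : ∀ a ∈ A, a.1 ≠ a.2)
    (FE : Finset (Sym2 V)) (FA : Finset (V × V)) (hFE : FE ⊆ E) (hFA : FA ⊆ A) :
    IsMixedEdgeCover FE FA ↔
      ∃ B ⊆ FA, IsBranching B ∧ rootSet B ⊆ edgeCovered FE := by
  classical
  constructor
  · intro h
    -- every vertex lies in some reachSet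
    have hex : ∀ v : V, ∃ n, v ∈ reachSet FE FA n := by
      intro v
      obtain ⟨u, ⟨e, heFE, hue⟩, hreach⟩ := h v
      have hu0 : u ∈ reachSet FE FA 0 := by
        simp only [reachSet, edgeCovered, Finset.mem_filter, Finset.mem_univ, true_and,
          edgeCoverCount, Finset.card_pos]
        exact ⟨e, Finset.mem_filter.2 ⟨heFE, hue⟩⟩
      induction hreach with
      | refl => exact ⟨0, hu0⟩
      | tail hbc hcd ih =>
        obtain ⟨n, hbn⟩ := ih
        exact ⟨n + 1, Finset.mem_union_right _ (Finset.mem_filter.2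
          ⟨Finset.mem_univ _, _, hbn, hcd⟩)⟩
    let d : V → ℕ := fun v => Nat.find (hex v)
    have hdspec : ∀ v, v ∈ reachSet FE FA (d v) := fun v => Nat.find_spec (hex v)
    -- for each v with d v ≠ 0, choose a predecessor
    have hpred : ∀ v : V, d v ≠ 0 → ∃ u, (u, v) ∈ FA ∧ d u < d v := by
      intro v hv
      obtain ⟨m, hm⟩ := Nat.exists_eq_succ_of_ne_zero hv
      have hvm : v ∈ reachSet FE FA (m + 1) := by
        have := hdspec v; rwa [hm] at this
      have hvnot : v ∉ reachSet FE FA m := by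
        have := Nat.find_min (hex v) (show m < d v by omega)
        exact this
      rcases Finset.mem_union.1 hvm with h1 | h1
      · exact absurd h1 hvnot
      · obtain ⟨-, u, hu, huv⟩ := Finset.mem_filter.1 h1
        refine ⟨u, huv, ?_⟩
        have : d u ≤ m := Nat.find_min' (hex u) hu
        omega
    let pred : V → V := fun v => if hv : d v ≠ 0 then (hpred v hv).choose else v
    have hpredFA : ∀ v, d v ≠ 0 → (pred v, v) ∈ FA := by
      intro v hv
      simp only [pred, dif_pos hv]
      exact (hpred v hv).choose_spec.1
    have hpredlt : ∀ v, d v ≠ 0 → d (pred v) < d v := by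
      intro v hv
      simp only [pred, dif_pos hv]
      exact (hpred v hv).choose_spec.2
    refine ⟨(Finset.univ.filter (fun v => d v ≠ 0)).image (fun v => (pred v, v)), ?_, ?_, ?_⟩
    · intro a ha
      obtain ⟨v, hv, rfl⟩ := Finset.mem_image.1 ha
      exact hpredFA v (Finset.mem_filter.1 hv).2
    · set B := (Finset.univ.filter (fun v => d v ≠ 0)).image (fun v => (pred v, v)) with hB
      have hmemB : ∀ a ∈ B, a = (pred a.2, a.2) ∧ d a.2 ≠ 0 := by
        intro a ha
        obtain ⟨v, hv, rfl⟩ := Finset.mem_image.1 ha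
        exact ⟨rfl, (Finset.mem_filter.1 hv).2⟩
      have hlt : ∀ a ∈ B, d a.1 < d a.2 := by
        intro a ha
        obtain ⟨h1, h2⟩ := hmemB a ha
        rw [h1]
        exact hpredlt _ h2
      have hreachle : ∀ {x y : V}, arcReach B x y → d x ≤ d y := by
        intro x y hxy
        induction hxy with
        | refl => exact le_rfl
        | tail hbc hcd ih => exact le_trans ih (le_of_lt (hlt _ hcd))
      constructor
      · intro v
        rw [arcCoverCount]
        refine Finset.card_le_one.2 ?_
        intro a ha b hb
        simp only [Finset.mem_filter] at ha hb
        rw [(hmemB a ha.1).1, (hmemB b hb.1).1, ha.2, hb.2]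
      · intro a ha hr
        have h1 := hlt a ha
        have h2 := hreachle hr
        omega
    · intro v hv
      simp only [rootSet, Finset.mem_filter] at hv
      by_contra hvne
      have hd0 : d v ≠ 0 := by
        intro hd
        have := hdspec v
        rw [hd] at this
        exact hvne this
      have : (pred v, v) ∈ (Finset.univ.filter (fun v => d v ≠ 0)).image
          (fun v => (pred v, v)) :=
        Finset.mem_image.2 ⟨v, Finset.mem_filter.2 ⟨Finset.mem_univ _, hd0⟩, rfl⟩
      have hcount : 0 < arcCoverCount
          ((Finset.univ.filter (fun v => d v ≠ 0)).image (fun v => (pred v, v))) v := by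
        rw [arcCoverCount, Finset.card_pos]
        exact ⟨(pred v, v), Finset.mem_filter.2 ⟨this, rfl⟩⟩
      omega
  · rintro ⟨B, hBFA, ⟨hdeg, hacyc⟩, hroot⟩
    intro v
    have mono : ∀ {u w : V}, (u, w) ∈ B →
        (Finset.univ.filter (fun x => arcReach B x u)) ⊂
          (Finset.univ.filter (fun x => arcReach B x w)) := by
      intro u w huw
      constructor
      · intro x hx
        simp only [Finset.mem_filter, Finset.mem_univ, true_and] at hx ⊢
        exact hx.tail huw
      · intro hsub
        have hw : w ∈ (Finset.univ.filter (fun x => arcReach B x w)) :=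
          Finset.mem_filter.2 ⟨Finset.mem_univ _, Relation.ReflTransGen.refl⟩
        have := Finset.mem_filter.1 (hsub hw)
        exact hacyc (u, w) huw this.2
    have key : ∀ n (w : V), (Finset.univ.filter (fun x => arcReach B x w)).card ≤ n →
        ∃ r, arcCoverCount B r = 0 ∧ arcReach B r w := by
      intro n
      induction n with
      | zero =>
        intro w hw
        exfalso
        have : w ∈ (Finset.univ.filter (fun x => arcReach B x w)) :=
          Finset.mem_filter.2 ⟨Finset.mem_univ _, Relation.ReflTransGen.refl⟩
        have := Finset.card_pos.2 ⟨w, this⟩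
        omega
      | succ n ih =>
        intro w hw
        by_cases h0 : arcCoverCount B w = 0
        · exact ⟨w, h0, Relation.ReflTransGen.refl⟩
        · have : (B.filter (fun a => a.2 = w)).Nonempty := by
            rw [← Finset.card_pos]
            rw [arcCoverCount] at h0
            omega
          obtain ⟨a, ha⟩ := this
          obtain ⟨haB, ha2⟩ := Finset.mem_filter.1 ha
          have haB' : (a.1, w) ∈ B := by rwa [← ha2, Prod.mk.eta]
          have hcard := Finset.card_lt_card (mono haB')
          obtain ⟨r, hr0, hrr⟩ := ih a.1 (by omega)
          exact ⟨r, hr0, hrr.tail haB'⟩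
    obtain ⟨r, hr0, hrr⟩ := key _ v le_rfl
    have hrroot : r ∈ rootSet B := Finset.mem_filter.2 ⟨Finset.mem_univ _, hr0⟩
    have hrcov := hroot hrroot
    simp only [edgeCovered, Finset.mem_filter, Finset.mem_univ, true_and,
      edgeCoverCount, Finset.card_pos] at hrcov
    obtain ⟨e, he⟩ := hrcov
    obtain ⟨heFE, hre⟩ := Finset.mem_filter.1 he
    refine ⟨r, ⟨e, heFE, hre⟩, ?_⟩
    exact Relation.ReflTransGen.mono (fun x y hxy => hBFA hxy) r v hrr
end

section
/- Every mixed covering forest of a mixed graph is a mixed edge cover. -/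
variable {V : Type*} [Fintype V] [DecidableEq V]

theorem mixed_covering_forest_is_mixed_edge_cover
    (E : Finset (Sym2 V)) (A : Finset (V × V))
    (hE : ∀ e ∈ E, ¬ e.IsDiag) (hA : ∀ a ∈ A, a.1 ≠ a.2)
    (FE : Finset (Sym2 V)) (FA : Finset (V × V)) (hFE : FE ⊆ E) (hFA : FA ⊆ A)
    (h : IsMixedCoveringForest FE FA) :
    IsMixedEdgeCover FE FA := by
  classical
  obtain ⟨hac, hcov⟩ := h
  intro v
  have hpick : ∀ u : V, edgeCoverCount FE u = 0 → ∃ p : V × V, p ∈ FA ∧ p.2 = u := by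
    intro u hu
    have h1 : 1 ≤ arcCoverCount FA u := by have := hcov u; omega
    have hne : (FA.filter (fun a => a.2 = u)).Nonempty := by
      rw [← Finset.card_pos]; exact h1
    obtain ⟨p, hp⟩ := hne
    simp only [Finset.mem_filter] at hp
    exact ⟨p, hp.1, hp.2⟩
  set f : V → V := fun u =>
    if h : edgeCoverCount FE u = 0 then (hpick u h).choose.1 else u with hf
  have hfarc : ∀ u, edgeCoverCount FE u = 0 → (f u, u) ∈ FA := by
    intro u hu
    obtain ⟨hmem, heq⟩ := (hpick u hu).choose_spec
    simp only [hf, dif_pos hu]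
    have h2 : ((hpick u hu).choose.1, (hpick u hu).choose.2) = (hpick u hu).choose :=
      Prod.mk.eta
    rw [heq] at h2
    rw [h2]
    exact hmem
  set w : ℕ → V := fun k => f^[k] v with hw
  have hstep : ∀ k : ℕ, w (k + 1) = f (w k) := by
    intro k; simp only [hw, Function.iterate_succ_apply']
  have hex : ∃ k, edgeCoverCount FE (w k) ≠ 0 := by
    by_contra hno
    push_neg at hno
    obtain ⟨i, j, hij, heq⟩ : ∃ i j : ℕ, i < j ∧ w i = w j := by
      obtain ⟨x, y, hxy, hxyeq⟩ := Finite.exists_ne_map_eq_of_infinite w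
      rcases lt_trichotomy x y with h' | h' | h'
      · exact ⟨x, y, h', hxyeq⟩
      · exact absurd h' hxy
      · exact ⟨y, x, h', hxyeq.symm⟩
    set C : Finset V := (Finset.Ico i j).image w with hC
    have hwC : ∀ k, i ≤ k → k < j → w k ∈ C := by
      intro k h1 h2
      exact Finset.mem_image.mpr ⟨k, Finset.mem_Ico.mpr ⟨h1, h2⟩, rfl⟩
    have hclosed : ∀ c ∈ C, f c ∈ C := by
      intro c hc
      obtain ⟨k, hk, rfl⟩ := Finset.mem_image.mp hc
      obtain ⟨hk1, hk2⟩ := Finset.mem_Ico.mp hk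
      rw [← hstep k]
      rcases lt_or_eq_of_le (Nat.succ_le_of_lt hk2) with h' | h'
      · exact hwC _ (le_trans hk1 (Nat.le_succ k)) h'
      · have h'' : k + 1 = j := h'
        rw [h'', ← heq]; exact hwC i le_rfl hij
    set T : Finset (V × V) := C.image (fun c => (f c, c)) with hT
    have hTinj : Function.Injective (fun c : V => (f c, c)) := by
      intro a b hab
      exact congrArg Prod.snd hab
    have hTcard : T.card = C.card := Finset.card_image_of_injective _ hTinj
    have hTFA : T ⊆ FA := by
      intro p hp
      obtain ⟨c, hc, rfl⟩ := Finset.mem_image.mp hp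
      obtain ⟨k, hk, rfl⟩ := Finset.mem_image.mp hc
      exact hfarc _ (hno k)
    set S : Multiset (Sym2 V) := T.val.map (fun a => s(a.1, a.2)) with hS
    have hSle : S ≤ underlyingEdges FE FA := by
      have h1 : T.val ≤ FA.val := Finset.val_le_iff.mpr hTFA
      calc S ≤ FA.val.map (fun a => s(a.1, a.2)) := Multiset.map_le_map h1
        _ ≤ underlyingEdges FE FA := Multiset.le_add_left _ _
    have hSne : S ≠ 0 := by
      have : w i ∈ C := hwC i le_rfl hij
      have hT0 : (f (w i), w i) ∈ T := Finset.mem_image_of_mem _ this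
      intro h0
      have : s(f (w i), w i) ∈ S := by
        have := Multiset.mem_map_of_mem (fun a : V × V => s(a.1, a.2)) (Finset.mem_val.mpr hT0); exact this
      rw [h0] at this
      exact absurd this (Multiset.notMem_zero _)
    have hlt := hac S hSle hSne
    have hcardS : Multiset.card S = C.card := by
      rw [hS, Multiset.card_map]; exact hTcard
    have htouch : (Finset.univ.filter (fun u : V => ∃ e ∈ S.toFinset, u ∈ e)) ⊆ C := by
      intro u hu
      obtain ⟨e, he, hue⟩ := (Finset.mem_filter.mp hu).2
      have he' : e ∈ S := Multiset.mem_toFinset.mp he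
      obtain ⟨p, hp, rfl⟩ := Multiset.mem_map.mp he'
      obtain ⟨c, hc, rfl⟩ := Finset.mem_image.mp (Finset.mem_val.mp hp)
      rcases Sym2.mem_iff.mp hue with h' | h'
      · exact h' ▸ hclosed c hc
      · exact h' ▸ hc
    have := Finset.card_le_card htouch
    omega
  obtain ⟨k, hk⟩ := hex
  have key : ∀ m : ℕ, (∀ t < m, edgeCoverCount FE (w t) = 0) → arcReach FA (w m) v := by
    intro m
    induction m with
    | zero => intro _; exact Relation.ReflTransGen.refl
    | succ n ih =>
      intro hm
      have h1 : (f (w n), w n) ∈ FA := hfarc _ (hm n (Nat.lt_succ_self n))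
      rw [hstep n]
      exact Relation.ReflTransGen.head h1 (ih fun t ht => hm t (Nat.lt_succ_of_lt ht))
  have hkex : ∃ k, edgeCoverCount FE (w k) ≠ 0 := ⟨k, hk⟩
  set k0 := Nat.find hkex with hk0
  have hk0cov : edgeCoverCount FE (w k0) ≠ 0 := Nat.find_spec hkex
  have hk0min : ∀ t < k0, edgeCoverCount FE (w t) = 0 := by
    intro t ht
    by_contra h'
    exact absurd (Nat.find_le h') (not_le.mpr ht)
  refine ⟨w k0, ?_, key k0 hk0min⟩
  have : (FE.filter (fun e => w k0 ∈ e)).Nonempty := by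
    rw [← Finset.card_pos]
    exact Nat.pos_of_ne_zero hk0cov
  obtain ⟨e, he⟩ := this
  simp only [Finset.mem_filter] at he
  exact ⟨e, he.1, he.2⟩
end

section
/- A subset F ⊆ E ∪ A of a mixed graph is an inclusionwise minimal mixed edge cover if and only if it is an inclusionwise minimal mixed covering forest. -/
variable {V : Type*} [Fintype V] [DecidableEq V]

set_option linter.unusedSectionVars false

-- small lemmas
lemma edgeCoverCount_pos_iff (FE : Finset (Sym2 V)) (v : V) :
    0 < edgeCoverCount FE v ↔ ∃ e ∈ FE, v ∈ e := by
  simp [edgeCoverCount, Finset.card_pos, Finset.filter_nonempty_iff]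

lemma arcCoverCount_pos_iff (FA : Finset (V × V)) (v : V) :
    0 < arcCoverCount FA v ↔ ∃ a ∈ FA, a.2 = v := by
  simp [arcCoverCount, Finset.card_pos, Finset.filter_nonempty_iff]

lemma mec_coverage {FE : Finset (Sym2 V)} {FA : Finset (V × V)}
    (h : IsMixedEdgeCover FE FA) (v : V) :
    1 ≤ edgeCoverCount FE v + arcCoverCount FA v := by
  obtain ⟨u, hu, hr⟩ := h v
  rcases Relation.ReflTransGen.cases_tail hr with heq | ⟨c, _, hc⟩
  · have : 0 < edgeCoverCount FE v := (edgeCoverCount_pos_iff FE v).2 (heq ▸ hu)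
    omega
  · have : 0 < arcCoverCount FA v := (arcCoverCount_pos_iff FA v).2 ⟨(c, v), hc, rfl⟩
    omega

lemma underlying_mono {FE' FE : Finset (Sym2 V)} {FA' FA : Finset (V × V)}
    (h1 : FE' ⊆ FE) (h2 : FA' ⊆ FA) :
    underlyingEdges FE' FA' ≤ underlyingEdges FE FA := by
  exact add_le_add (Finset.val_le_iff.2 h1) (Multiset.map_le_map (Finset.val_le_iff.2 h2))

set_option linter.unusedSectionVars false

lemma mcf_is_mec {FE : Finset (Sym2 V)} {FA : Finset (V × V)}
    (hf : IsMixedCoveringForest FE FA) : IsMixedEdgeCover FE FA := by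
  classical
  by_contra hnc
  simp only [IsMixedEdgeCover, not_forall] at hnc
  obtain ⟨v0, hv0⟩ := hnc
  set T : Finset V := Finset.univ.filter
    (fun v => ¬ ∃ u : V, (∃ e ∈ FE, u ∈ e) ∧ arcReach FA u v) with hT
  have hv0T : v0 ∈ T := Finset.mem_filter.2 ⟨Finset.mem_univ _, hv0⟩
  -- every vertex of T has an in-arc from T
  have key : ∀ v ∈ T, ∃ u, u ∈ T ∧ (u, v) ∈ FA := by
    intro v hv
    have hvP : ¬ ∃ u : V, (∃ e ∈ FE, u ∈ e) ∧ arcReach FA u v := by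
      simpa [hT] using hv
    have hcov := hf.2 v
    have hE0 : edgeCoverCount FE v = 0 := by
      by_contra h
      exact hvP ⟨v, (edgeCoverCount_pos_iff FE v).1 (Nat.pos_of_ne_zero h),
        Relation.ReflTransGen.refl⟩
    have hA0 : 0 < arcCoverCount FA v := by omega
    obtain ⟨a, ha, ha2⟩ := (arcCoverCount_pos_iff FA v).1 hA0
    refine ⟨a.1, ?_, by rw [← ha2]; exact ha⟩
    simp only [hT, Finset.mem_filter, Finset.mem_univ, true_and]
    rintro ⟨u, hu, hr⟩
    exact hvP ⟨u, hu, hr.tail (by rw [← ha2]; exact ha)⟩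
  -- choose parents
  choose g hgT hgA using key
  set D : Finset (V × V) :=
    T.attach.image (fun v => (g v.1 v.2, v.1)) with hD
  have hDcard : D.card = T.card := by
    rw [hD, Finset.card_image_of_injective _ (fun a b hab => Subtype.ext (congrArg Prod.snd hab)),
      Finset.card_attach]
  have hDFA : D ⊆ FA := by
    intro a ha
    simp only [hD, Finset.mem_image] at ha
    obtain ⟨v, _, rfl⟩ := ha
    exact hgA v.1 v.2
  set S : Multiset (Sym2 V) := D.val.map (fun a => s(a.1, a.2)) with hS
  have hSle : S ≤ underlyingEdges FE FA := by
    refine le_trans ?_ (Multiset.le_add_left _ _)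
    exact Multiset.map_le_map (Finset.val_le_iff.2 hDFA)
  have hScard : Multiset.card S = T.card := by
    rw [hS, Multiset.card_map]; exact hDcard
  have hS0 : S ≠ 0 := by
    intro h
    have : T.card = 0 := by rw [← hScard, h]; rfl
    have := Finset.card_pos.2 ⟨v0, hv0T⟩
    omega
  have hVS : (Finset.univ.filter (fun v : V => ∃ e ∈ S.toFinset, v ∈ e)) ⊆ T := by
    intro w hw
    simp only [Finset.mem_filter, Finset.mem_univ, true_and, Multiset.mem_toFinset] at hw
    obtain ⟨e, he, hwe⟩ := hw
    rw [hS] at he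
    obtain ⟨a, haD, rfl⟩ := Multiset.mem_map.1 he
    have haD' : a ∈ D := haD
    simp only [hD, Finset.mem_image] at haD'
    obtain ⟨v, _, rfl⟩ := haD'
    rcases Sym2.mem_iff.1 hwe with rfl | rfl
    · exact hgT v.1 v.2
    · exact v.2
  have := hf.1 S hSle hS0
  have := Finset.card_le_card hVS
  omega

lemma sym2_two_mem {a : Sym2 V} (h : ¬ a.IsDiag) : ∃ x y : V, x ≠ y ∧ x ∈ a ∧ y ∈ a := by
  induction a using Sym2.inductionOn with
  | hf x y =>
    exact ⟨x, y, by simpa using h, Sym2.mem_mk_left _ _, Sym2.mem_mk_right _ _⟩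

lemma acyclic_aux (M : Multiset (Sym2 V)) (hdiag : ∀ e ∈ M, ¬ e.IsDiag)
    (hdeg : ∀ S : Multiset (Sym2 V), S ≤ M → S ≠ 0 →
      ∃ v e, e ∈ S ∧ v ∈ e ∧ (S.filter (fun e' => v ∈ e')).card ≤ 1) :
    AcyclicEdgeMultiset M := by
  classical
  suffices H : ∀ n (S : Multiset (Sym2 V)), Multiset.card S = n → S ≤ M → S ≠ 0 →
      Multiset.card S < (Finset.univ.filter (fun v : V => ∃ e ∈ S.toFinset, v ∈ e)).card by
    intro S hSM hS0
    exact H _ S rfl hSM hS0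
  intro n
  induction n using Nat.strong_induction_on with
  | _ n ih =>
  intro S hn hSM hS0
  obtain ⟨v, e, heS, hve, hd1⟩ := hdeg S hSM hS0
  -- S.filter (v ∈ ·) = {e}
  have hefilt : e ∈ S.filter (fun e' => v ∈ e') := Multiset.mem_filter.2 ⟨heS, hve⟩
  have hcard1 : (S.filter (fun e' => v ∈ e')).card = 1 := by
    have : 0 < (S.filter (fun e' => v ∈ e')).card :=
      Multiset.card_pos_iff_exists_mem.2 ⟨e, hefilt⟩
    omega
  obtain ⟨a, hae⟩ := Multiset.card_eq_one.1 hcard1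
  have haeq : a = e := by
    have := hefilt; rw [hae] at this
    exact (Multiset.mem_singleton.1 this).symm
  subst haeq
  set S' := S.erase a with hS'
  have hS'le : S' ≤ S := Multiset.erase_le _ _
  have hcards : Multiset.card S = Multiset.card S' + 1 := by
    rw [hS', Multiset.card_erase_of_mem heS]
    have : 0 < Multiset.card S := Multiset.card_pos_iff_exists_mem.2 ⟨a, heS⟩
    exact (Nat.succ_pred_eq_of_pos this).symm
  have hvS : v ∈ Finset.univ.filter (fun w : V => ∃ a ∈ S.toFinset, w ∈ a) :=
    Finset.mem_filter.2 ⟨Finset.mem_univ _, ⟨a, Multiset.mem_toFinset.2 heS, hve⟩⟩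
  have hvnotS' : ∀ a' ∈ S', v ∉ a' := by
    intro a' he' hv'
    by_cases h : a' = a
    · rw [h] at he'
      rw [hS'] at he'
      have h2 : 2 ≤ Multiset.count a S := by
        have hc := Multiset.count_erase_self a S
        have := Multiset.count_pos.2 he'
        omega
      have : 2 ≤ (S.filter (fun a'' => v ∈ a'')).card := by
        calc 2 ≤ Multiset.count a S := h2
        _ = Multiset.count a (S.filter (fun a'' => v ∈ a'')) :=
          (Multiset.count_filter_of_pos (p := fun a'' => v ∈ a'') hve).symm
        _ ≤ _ := Multiset.count_le_card _ _
      omega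
    · have : a' ∈ S.filter (fun a' => v ∈ a') :=
        Multiset.mem_filter.2 ⟨Multiset.mem_of_mem_erase he', hv'⟩
      rw [hae] at this
      exact h (by simpa using this)
  by_cases hS'0 : S' = 0
  · -- S = {a}, card 1, two endpoints
    have hScard : Multiset.card S = 1 := by rw [hcards, hS'0]; simp
    obtain ⟨x, y, hxy, hxa, hya⟩ := sym2_two_mem (hdiag _ (Multiset.mem_of_le hSM heS))
    have hsub : ({x, y} : Finset V) ⊆
        Finset.univ.filter (fun w : V => ∃ a ∈ S.toFinset, w ∈ a) := by
      intro w hw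
      refine Finset.mem_filter.2 ⟨Finset.mem_univ _, ⟨a, Multiset.mem_toFinset.2 heS, ?_⟩⟩
      rcases Finset.mem_insert.1 hw with rfl | hw
      · exact hxa
      · rw [Finset.mem_singleton.1 hw]; exact hya
    have h2 : 2 ≤ (Finset.univ.filter (fun w : V => ∃ a ∈ S.toFinset, w ∈ a)).card := by
      have := Finset.card_le_card hsub
      rwa [Finset.card_insert_of_notMem (by simp [hxy]), Finset.card_singleton] at this
    omega
  · -- inductive step
    have hIH := ih (Multiset.card S') (by omega) S' rfl (le_trans hS'le hSM) hS'0
    have hsub : (Finset.univ.filter (fun w : V => ∃ a ∈ S'.toFinset, w ∈ a)) ⊆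
        (Finset.univ.filter (fun w : V => ∃ a ∈ S.toFinset, w ∈ a)).erase v := by
      intro w hw
      simp only [Finset.mem_filter, Finset.mem_univ, true_and, Multiset.mem_toFinset] at hw
      obtain ⟨a', he', hwe'⟩ := hw
      refine Finset.mem_erase.2 ⟨?_, Finset.mem_filter.2 ⟨Finset.mem_univ _,
        ⟨a', Multiset.mem_toFinset.2 (Multiset.mem_of_le hS'le he'), hwe'⟩⟩⟩
      intro h; subst h; exact hvnotS' a' he' hwe'
    have hcard' := Finset.card_le_card hsub
    rw [Finset.card_erase_of_mem hvS] at hcard'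
    have hpos : 0 < (Finset.univ.filter (fun w : V => ∃ a ∈ S.toFinset, w ∈ a)).card :=
      Finset.card_pos.2 ⟨v, hvS⟩
    omega

def ReachN (FE : Finset (Sym2 V)) (FA : Finset (V × V)) : ℕ → V → Prop
  | 0, v => 0 < edgeCoverCount FE v
  | n+1, v => ReachN FE FA n v ∨ ∃ u, ReachN FE FA n u ∧ (u, v) ∈ FA

lemma mem_edgeCovered {FE : Finset (Sym2 V)} {v : V} :
    v ∈ edgeCovered FE ↔ 0 < edgeCoverCount FE v := by
  simp [edgeCovered]

lemma exists_acyclic_sub {E : Finset (Sym2 V)} {A : Finset (V × V)}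
    (hE : ∀ e ∈ E, ¬ e.IsDiag) (hA : ∀ a ∈ A, a.1 ≠ a.2)
    {FE : Finset (Sym2 V)} {FA : Finset (V × V)} (hFE : FE ⊆ E) (hFA : FA ⊆ A)
    (hcov : IsMixedEdgeCover FE FA) :
    ∃ FE' FA', FE' ⊆ FE ∧ FA' ⊆ FA ∧ IsMixedEdgeCover FE' FA' ∧
      AcyclicEdgeMultiset (underlyingEdges FE' FA') := by
  classical
  have hex : ∀ v, ∃ n, ReachN FE FA n v := by
    intro v
    obtain ⟨u, hu, hr⟩ := hcov v
    have h0 : ∃ n, ReachN FE FA n u := ⟨0, (edgeCoverCount_pos_iff FE u).2 hu⟩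
    clear hu
    induction hr with
    | refl => exact h0
    | tail _ hstep ih => obtain ⟨n, hn⟩ := ih; exact ⟨n+1, Or.inr ⟨_, hn, hstep⟩⟩
  set lev : V → ℕ := fun v => Nat.find (hex v) with hlev
  have hlev_spec : ∀ v, ReachN FE FA (lev v) v := fun v => Nat.find_spec (hex v)
  have hlev_min : ∀ v n, ReachN FE FA n v → lev v ≤ n := fun v n h => Nat.find_le h
  have hlev_not : ∀ v n, n < lev v → ¬ ReachN FE FA n v := fun v n h => Nat.find_min (hex v) h
  have hlev0 : ∀ v, lev v = 0 ↔ 0 < edgeCoverCount FE v := by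
    intro v
    constructor
    · intro h
      have hsp := hlev_spec v
      rw [h] at hsp
      exact hsp
    · intro h
      exact Nat.le_zero.1 (hlev_min v 0 h)
  have hparent : ∀ v, ∃ u, (0 < lev v → (u, v) ∈ FA ∧ lev u < lev v) := by
    intro v
    by_cases hv : 0 < lev v
    · obtain ⟨m, hm⟩ : ∃ m, lev v = m + 1 := ⟨lev v - 1, by omega⟩
      have hspec := hlev_spec v
      rw [hm] at hspec
      rcases hspec with h | ⟨u, hu, huv⟩
      · exact absurd h (hlev_not v m (by omega))
      · exact ⟨u, fun _ => ⟨huv, lt_of_le_of_lt (hlev_min u m hu) (by omega)⟩⟩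
    · exact ⟨v, fun h => absurd h hv⟩
  choose p hp using hparent
  set FA' : Finset (V × V) :=
    (Finset.univ.filter (fun v => 0 < lev v)).image (fun v => (p v, v)) with hFA'
  have hFA'mem : ∀ a ∈ FA', ∃ w, 0 < lev w ∧ a = (p w, w) := by
    intro a ha
    simp only [hFA', Finset.mem_image, Finset.mem_filter, Finset.mem_univ, true_and] at ha
    obtain ⟨w, hw, rfl⟩ := ha
    exact ⟨w, hw, rfl⟩
  have hFA'mem' : ∀ w, 0 < lev w → (p w, w) ∈ FA' := by
    intro w hw
    simp only [hFA', Finset.mem_image, Finset.mem_filter, Finset.mem_univ, true_and]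
    exact ⟨w, hw, rfl⟩
  have hFA'sub : FA' ⊆ FA := by
    intro a ha
    obtain ⟨w, hw, rfl⟩ := hFA'mem a ha
    exact (hp w hw).1
  -- minimal FE'
  obtain ⟨FE', hFE's, hFE'min⟩ := Finset.exists_minimal (s :=
    (FE.powerset).filter (fun Y => edgeCovered FE ⊆ edgeCovered Y))
    ⟨FE, Finset.mem_filter.2 ⟨Finset.mem_powerset.2 (Finset.Subset.refl _), Finset.Subset.refl _⟩⟩
  have hFE'sub : FE' ⊆ FE := Finset.mem_powerset.1 (Finset.mem_filter.1 hFE's).1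
  have hRcov : edgeCovered FE ⊆ edgeCovered FE' := (Finset.mem_filter.1 hFE's).2
  have hFE'min' : ∀ Y ⊆ FE', edgeCovered FE ⊆ edgeCovered Y → Y = FE' := by
    intro Y hY hYc
    by_contra hne
    exact hne (le_antisymm hY
      (hFE'min (Finset.mem_filter.2 ⟨Finset.mem_powerset.2 (hY.trans hFE'sub), hYc⟩) hY))
  -- vertices of FE' edges have lev 0
  have hlev_edge : ∀ v (g : Sym2 V), g ∈ FE' → v ∈ g → lev v = 0 := by
    intro v g hg hv
    exact (hlev0 v).2 ((edgeCoverCount_pos_iff FE v).2 ⟨g, hFE'sub hg, hv⟩)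
  -- MEC for (FE', FA')
  have hmec : IsMixedEdgeCover FE' FA' := by
    intro v
    suffices H : ∀ n (v : V), lev v = n → ∃ u, (∃ e ∈ FE', u ∈ e) ∧ arcReach FA' u v from
      H _ v rfl
    intro n
    induction n using Nat.strong_induction_on with
    | _ n ih =>
    intro v hn
    by_cases hv : 0 < lev v
    · have hplt := (hp v hv).2
      obtain ⟨u, hu, hr⟩ := ih (lev (p v)) (by omega) (p v) rfl
      exact ⟨u, hu, hr.tail (hFA'mem' v hv)⟩
    · have h0 : v ∈ edgeCovered FE := mem_edgeCovered.2 ((hlev0 v).1 (by omega))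
      obtain ⟨e, he, hve⟩ := (edgeCoverCount_pos_iff FE' v).1 (mem_edgeCovered.1 (hRcov h0))
      exact ⟨v, ⟨e, he, hve⟩, Relation.ReflTransGen.refl⟩
  refine ⟨FE', FA', hFE'sub, hFA'sub, hmec, ?_⟩
  set M' := underlyingEdges FE' FA' with hM'
  have hM'mem : ∀ g ∈ M', g ∈ FE'.val ∨ ∃ w, 0 < lev w ∧ g = s(p w, w) := by
    intro g hg
    rcases Multiset.mem_add.1 hg with h | h
    · exact Or.inl h
    · obtain ⟨a, ha, rfl⟩ := Multiset.mem_map.1 h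
      obtain ⟨w, hw, rfl⟩ := hFA'mem a ha
      exact Or.inr ⟨w, hw, rfl⟩
  apply acyclic_aux
  · intro g hg
    rcases hM'mem g hg with h | ⟨w, hw, rfl⟩
    · exact hE g (hFE (hFE'sub h))
    · rw [Sym2.mk_isDiag_iff]
      exact hA _ (hFA ((hp w hw).1))
  · intro S hSM' hS0
    set W := Finset.univ.filter (fun v : V => ∃ e ∈ S.toFinset, v ∈ e) with hW
    have hmemW : ∀ v (g : Sym2 V), g ∈ S → v ∈ g → v ∈ W := by
      intro v g hg hv
      exact Finset.mem_filter.2 ⟨Finset.mem_univ _, ⟨g, Multiset.mem_toFinset.2 hg, hv⟩⟩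
    have hWne : W.Nonempty := by
      obtain ⟨g, hg⟩ := Multiset.exists_mem_of_ne_zero hS0
      have hgM := Multiset.mem_of_le hSM' hg
      have : ¬ g.IsDiag := by
        rcases hM'mem g hgM with h | ⟨w, hw, rfl⟩
        · exact hE g (hFE (hFE'sub h))
        · rw [Sym2.mk_isDiag_iff]; exact hA _ (hFA ((hp w hw).1))
      obtain ⟨x, _, _, hx, _⟩ := sym2_two_mem this
      exact ⟨x, hmemW x g hg hx⟩
    obtain ⟨v, hvW, hvmax⟩ := Finset.exists_max_image W lev hWne
    obtain ⟨g0, hg0, hvg0⟩ : ∃ g ∈ S, v ∈ g := by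
      have := Finset.mem_filter.1 hvW
      obtain ⟨g, hg, hvg⟩ := this.2
      exact ⟨g, Multiset.mem_toFinset.1 hg, hvg⟩
    by_cases hv : 0 < lev v
    · -- max vertex has positive level: degree ≤ 1
      have claim1 : ∀ g ∈ S, v ∈ g → g = s(p v, v) := by
        intro g hg hvg
        rcases hM'mem g (Multiset.mem_of_le hSM' hg) with h | ⟨w, hw, rfl⟩
        · have := hlev_edge v g h hvg; omega
        · rcases Sym2.mem_iff.1 hvg with h | h
          · exfalso
            have h1 : lev w ≤ lev v := hvmax w (hmemW w _ hg (Sym2.mem_mk_right _ _))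
            have h2 := (hp w hw).2
            rw [← h] at h2
            omega
          · rw [h]
      have claim2 : Multiset.count (s(p v, v)) M' ≤ 1 := by
        rw [hM', underlyingEdges, Multiset.count_add]
        have hc1 : Multiset.count (s(p v, v)) FE'.val = 0 := by
          rw [Multiset.count_eq_zero]
          intro h
          have := hlev_edge v _ h (Sym2.mem_mk_right _ _)
          omega
        have hc2 : Multiset.count (s(p v, v)) (FA'.val.map (fun a => s(a.1, a.2))) ≤ 1 := by
          rw [Multiset.count_map]
          set t := FA'.val.filter (fun a => s(p v, v) = s(a.1, a.2)) with ht
          have hall : ∀ a ∈ t, a = (p v, v) := by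
            intro a ha
            have ha' := Multiset.mem_filter.1 ha
            obtain ⟨w, hw, rfl⟩ := hFA'mem a ha'.1
            have heq : s(p v, v) = s(p w, w) := ha'.2
            rcases Sym2.eq_iff.1 heq with ⟨h1, h2⟩ | ⟨h1, h2⟩
            · rw [h1, h2]
            · exfalso
              have h3 := (hp w hw).2
              have h4 := (hp v hv).2
              rw [← h2, ← h1] at h3
              omega
          calc Multiset.card t = Multiset.count (p v, v) t :=
                (Multiset.count_eq_card.2 (fun b hb => (hall b hb).symm)).symm
            _ ≤ Multiset.count (p v, v) FA'.val :=
                Multiset.count_le_of_le _ (Multiset.filter_le _ _)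
            _ ≤ 1 := Multiset.nodup_iff_count_le_one.1 FA'.nodup _
        omega
      refine ⟨v, g0, hg0, hvg0, ?_⟩
      have hall : ∀ b ∈ S.filter (fun e' => v ∈ e'), s(p v, v) = b := by
        intro b hb
        have := Multiset.mem_filter.1 hb
        exact (claim1 b this.1 this.2).symm
      calc (S.filter (fun e' => v ∈ e')).card
          = Multiset.count (s(p v, v)) (S.filter (fun e' => v ∈ e')) :=
            (Multiset.count_eq_card.2 hall).symm
        _ ≤ Multiset.count (s(p v, v)) S := Multiset.count_le_of_le _ (Multiset.filter_le _ _)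
        _ ≤ Multiset.count (s(p v, v)) M' := Multiset.count_le_of_le _ hSM'
        _ ≤ 1 := claim2
    · -- all vertices of S have level 0: S lives in FE', use minimality
      have hlevW : ∀ w ∈ W, lev w = 0 := by
        intro w hw
        have := hvmax w hw
        omega
      have hSFE' : S ≤ FE'.val := by
        rw [Multiset.le_iff_count]
        intro g
        by_cases hg : g ∈ S
        · have hcount := Multiset.count_le_of_le g hSM'
          have hmap : Multiset.count g (FA'.val.map (fun a => s(a.1, a.2))) = 0 := by
            rw [Multiset.count_eq_zero]
            intro h
            obtain ⟨a, ha, rfl⟩ := Multiset.mem_map.1 h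
            obtain ⟨w, hw, rfl⟩ := hFA'mem a ha
            have : lev w = 0 := hlevW w (hmemW w _ hg (Sym2.mem_mk_right _ _))
            omega
          rw [hM', underlyingEdges, Multiset.count_add, hmap] at hcount
          omega
        · rw [Multiset.count_eq_zero.2 hg]
          exact Nat.zero_le _
      have hSnodup : S.Nodup := Multiset.nodup_of_le hSFE' FE'.nodup
      by_contra hno
      push_neg at hno
      obtain ⟨e0, he0⟩ := Multiset.exists_mem_of_ne_zero hS0
      have he0FE' : e0 ∈ FE' := Multiset.mem_of_le hSFE' he0
      have hYcov : edgeCovered FE ⊆ edgeCovered (FE'.erase e0) := by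
        intro w hw
        obtain ⟨g, hg, hwg⟩ := (edgeCoverCount_pos_iff FE' w).1 (mem_edgeCovered.1 (hRcov hw))
        by_cases hge : g = e0
        · subst hge
          have hdeg2 := hno w g he0 hwg
          set t := S.filter (fun e' => w ∈ e') with ht
          have hgt : g ∈ t := Multiset.mem_filter.2 ⟨he0, hwg⟩
          have htnodup : t.Nodup := Multiset.Nodup.filter _ hSnodup
          have hcerase : (t.erase g).card = t.card - 1 :=
            Multiset.card_erase_of_mem hgt
          have htne : t.erase g ≠ 0 := by
            intro h
            rw [h] at hcerase
            simp at hcerase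
            omega
          obtain ⟨e', he'⟩ := Multiset.exists_mem_of_ne_zero htne
          have he'2 := (htnodup.mem_erase_iff).1 he'
          have he't := Multiset.mem_filter.1 he'2.2
          refine mem_edgeCovered.2 ((edgeCoverCount_pos_iff _ w).2 ⟨e', ?_, he't.2⟩)
          exact Finset.mem_erase.2 ⟨he'2.1, Multiset.mem_of_le hSFE' he't.1⟩
        · exact mem_edgeCovered.2 ((edgeCoverCount_pos_iff _ w).2
            ⟨g, Finset.mem_erase.2 ⟨hge, hg⟩, hwg⟩)
      have := hFE'min' (FE'.erase e0) (Finset.erase_subset _ _) hYcov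
      have : e0 ∉ FE'.erase e0 := Finset.notMem_erase _ _
      rw [‹FE'.erase e0 = FE'›] at this
      exact this he0FE'

theorem minimal_mec_iff_minimal_mcf
    (E : Finset (Sym2 V)) (A : Finset (V × V))
    (hE : ∀ e ∈ E, ¬ e.IsDiag) (hA : ∀ a ∈ A, a.1 ≠ a.2)
    (FE : Finset (Sym2 V)) (FA : Finset (V × V)) (hFE : FE ⊆ E) (hFA : FA ⊆ A) :
    (IsMixedEdgeCover FE FA ∧
      ∀ FE' FA', FE' ⊆ FE → FA' ⊆ FA → IsMixedEdgeCover FE' FA' →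
        FE' = FE ∧ FA' = FA) ↔
    (IsMixedCoveringForest FE FA ∧
      ∀ FE' FA', FE' ⊆ FE → FA' ⊆ FA → IsMixedCoveringForest FE' FA' →
        FE' = FE ∧ FA' = FA) := by
  constructor
  · rintro ⟨hc, hmin⟩
    obtain ⟨FE', FA', h1, h2, h3, h4⟩ := exists_acyclic_sub hE hA hFE hFA hc
    have hac : AcyclicEdgeMultiset (underlyingEdges FE FA) := by
      obtain ⟨e1, e2⟩ := hmin FE' FA' h1 h2 h3
      rwa [e1, e2] at h4
    refine ⟨⟨hac, fun v => mec_coverage hc v⟩, ?_⟩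
    intro FE'' FA'' hs1 hs2 hf
    exact hmin FE'' FA'' hs1 hs2 (mcf_is_mec hf)
  · rintro ⟨hf, hmin⟩
    refine ⟨mcf_is_mec hf, ?_⟩
    intro FE' FA' hs1 hs2 hc'
    refine hmin FE' FA' hs1 hs2 ⟨?_, fun v => mec_coverage hc' v⟩
    intro S hS hS0
    exact hf.1 S (le_trans hS (underlying_mono hs1 hs2)) hS0
end

section
/- If F is an inclusionwise minimal mixed edge cover, then for every arc a ∈ F ∩ A, the head of a is covered only by a in F; that is, the head of a is not an endpoint of any edge in F ∩ E and not the head of any other arc in F ∩ A. -/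
variable {V : Type*} [Fintype V] [DecidableEq V]

lemma arcReach_mono {B B' : Finset (V × V)} (h : B ⊆ B') {u v : V}
    (hr : arcReach B u v) : arcReach B' u v :=
  Relation.ReflTransGen.mono (fun x y hxy => h hxy) u v hr

/-- Suffix lemma: either a path avoids `c`, or its suffix from `c.2` avoids `c`. -/
lemma arcReach_erase_or {FA : Finset (V × V)} (c : V × V) {u v : V}
    (h : arcReach FA u v) :
    arcReach (FA.erase c) u v ∨ arcReach (FA.erase c) c.2 v := by
  induction h with
  | refl => exact Or.inl Relation.ReflTransGen.refl
  | @tail w x _ hstep ih =>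
    by_cases hc : (w, x) = c
    · right
      have : x = c.2 := by rw [← hc]
      rw [← this]
      exact Relation.ReflTransGen.refl
    · have hm : (w, x) ∈ FA.erase c := Finset.mem_erase.mpr ⟨hc, hstep⟩
      rcases ih with h1 | h1
      · exact Or.inl (h1.tail hm)
      · exact Or.inr (h1.tail hm)

/-- First-visit lemma: a path to `z` is trivial or its prefix to the first arrival
at `z` uses no arc with head `z` except the last one. -/
lemma arcReach_first {FA : Finset (V × V)} (z : V) {u : V}
    (h : arcReach FA u z) :
    u = z ∨ ∃ c ∈ FA, c.2 = z ∧
      arcReach (FA.filter (fun x => x.2 ≠ z)) u c.1 := by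
  induction h using Relation.ReflTransGen.head_induction_on with
  | refl => exact Or.inl rfl
  | @head p q hstep _ ih =>
    by_cases hq : q = z
    · subst hq
      exact Or.inr ⟨(p, q), hstep, rfl, Relation.ReflTransGen.refl⟩
    · rcases ih with h1 | ⟨c, hc, hcz, hpath⟩
      · exact absurd h1 hq
      · refine Or.inr ⟨c, hc, hcz, Relation.ReflTransGen.head ?_ hpath⟩
        exact Finset.mem_filter.mpr ⟨hstep, hq⟩

lemma cover_erase {FE : Finset (Sym2 V)} {FA : Finset (V × V)}
    (hmec : IsMixedEdgeCover FE FA) (d : V × V)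
    (hz : ∃ u : V, (∃ e ∈ FE, u ∈ e) ∧ arcReach (FA.erase d) u d.2) :
    IsMixedEdgeCover FE (FA.erase d) := by
  intro v
  obtain ⟨u, hu, hp⟩ := hmec v
  rcases arcReach_erase_or d hp with h1 | h1
  · exact ⟨u, hu, h1⟩
  · obtain ⟨u0, hu0, hp0⟩ := hz
    exact ⟨u0, hu0, hp0.trans h1⟩

theorem minimal_mec_head_covered_only_once
    (E : Finset (Sym2 V)) (A : Finset (V × V))
    (hE : ∀ e ∈ E, ¬ e.IsDiag) (hA : ∀ a ∈ A, a.1 ≠ a.2)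
    (FE : Finset (Sym2 V)) (FA : Finset (V × V)) (hFE : FE ⊆ E) (hFA : FA ⊆ A)
    (hmec : IsMixedEdgeCover FE FA)
    (hmin : ∀ FE' FA', FE' ⊆ FE → FA' ⊆ FA → IsMixedEdgeCover FE' FA' →
      FE' = FE ∧ FA' = FA) :
    ∀ a ∈ FA, (∀ e ∈ FE, a.2 ∉ e) ∧ (∀ b ∈ FA, b.2 = a.2 → b = a) := by
  intro a ha
  have key : ∀ d ∈ FA, IsMixedEdgeCover FE (FA.erase d) → False := by
    intro d hd hcov
    have h := (hmin FE (FA.erase d) (Finset.Subset.refl _)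
      (Finset.erase_subset _ _) hcov).2
    exact (Finset.erase_eq_self.mp h) hd
  constructor
  · intro e he hz
    exact key a ha (cover_erase hmec a ⟨a.2, ⟨e, he, hz⟩, Relation.ReflTransGen.refl⟩)
  · intro b hb hbz
    by_contra hne
    obtain ⟨u0, hu0, hp0⟩ := hmec a.2
    rcases arcReach_first a.2 hp0 with h0 | ⟨c, hc, hcz, hpath⟩
    · refine key a ha (cover_erase hmec a ⟨u0, hu0, ?_⟩)
      rw [h0]
      exact Relation.ReflTransGen.refl
    · set d : V × V := if c = a then b else a with hd
      have hdFA : d ∈ FA := by rw [hd]; split_ifs <;> assumption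
      have hdz : d.2 = a.2 := by rw [hd]; split_ifs <;> simp [hbz]
      have hdc : d ≠ c := by
        rw [hd]; split_ifs with h
        · rw [h]; exact hne
        · exact fun hh => h hh.symm
      have hsub : FA.filter (fun x => x.2 ≠ a.2) ⊆ FA.erase d := by
        intro x hx
        obtain ⟨hx1, hx2⟩ := Finset.mem_filter.mp hx
        exact Finset.mem_erase.mpr ⟨fun hh => hx2 (hh ▸ hdz), hx1⟩
      have hcd : c ∈ FA.erase d :=
        Finset.mem_erase.mpr ⟨fun hh => hdc hh.symm, hc⟩
      have hreach : arcReach (FA.erase d) u0 a.2 := by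
        refine (arcReach_mono hsub hpath).tail ?_
        have : (c.1, a.2) = c := by rw [← hcz]
        rw [this]; exact hcd
      exact key d hdFA (cover_erase hmec d ⟨u0, hu0, hdz ▸ hreach⟩)
end

section
/- Gallai's theorem for mixed graphs: Let G = (V, E ∪ A) be a mixed graph that admits at least one mixed edge cover. Define the mix-size of F ⊆ E ∪ A as ⟨F⟩ = |F ∩ E| + (1/2)|F ∩ A|. Let ν(G) be the maximum mix-size of a matching forest of G and ρ(G) the minimum mix-size of a mixed edge cover of G. Then ν(G) + ρ(G) = |V|. -/
variable {V : Type*} [Fintype V] [DecidableEq V]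

section Helpers

open Finset

lemma sym2_filter_card (e : Sym2 V) (h : ¬ e.IsDiag) :
    (Finset.univ.filter (fun v => v ∈ e)).card = 2 := by
  induction e using Sym2.inductionOn with
  | hf a b =>
    have hab : a ≠ b := by simpa [Sym2.mk_isDiag_iff] using h
    have he : Finset.univ.filter (fun v => v ∈ s(a, b)) = {a, b} := by
      ext v; simp [Sym2.mem_iff]
    rw [he, Finset.card_insert_of_notMem (by simp [hab]), Finset.card_singleton]

lemma arc_card_eq_sum (FA : Finset (V × V)) :
    FA.card = ∑ v, arcCoverCount FA v := by
  unfold arcCoverCount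
  exact Finset.card_eq_sum_card_fiberwise (fun a _ => Finset.mem_univ a.2)

lemma edge_card_eq_sum (FE : Finset (Sym2 V)) (h : ∀ e ∈ FE, ¬ e.IsDiag) :
    2 * FE.card = ∑ v, edgeCoverCount FE v := by
  unfold edgeCoverCount
  have : ∀ v : V, (FE.filter (fun e => v ∈ e)).card
      = ∑ e ∈ FE, if v ∈ e then 1 else 0 := by
    intro v; rw [Finset.card_filter]
  simp only [this]
  rw [Finset.sum_comm]
  have : ∀ e ∈ FE, (∑ v : V, if v ∈ e then 1 else 0) = 2 := by
    intro e he
    rw [← Finset.card_filter]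
    exact sym2_filter_card e (h e he)
  rw [Finset.sum_congr rfl this]
  simp [mul_comm]

end Helpers

section ACY

open Finset

lemma arcCount_pos {FA : Finset (V × V)} {p : V × V} (hp : p ∈ FA) :
    1 ≤ arcCoverCount FA p.2 :=
  Finset.card_pos.mpr ⟨p, Finset.mem_filter.mpr ⟨hp, rfl⟩⟩

lemma edgeCount_pos {FE : Finset (Sym2 V)} {e : Sym2 V} (he : e ∈ FE) {v : V} (hv : v ∈ e) :
    1 ≤ edgeCoverCount FE v :=
  Finset.card_pos.mpr ⟨e, Finset.mem_filter.mpr ⟨he, hv⟩⟩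

lemma sym2_exists_mem (x : Sym2 V) : ∃ a, a ∈ x :=
  Sym2.inductionOn x fun a b => ⟨a, Sym2.mem_mk_left a b⟩

lemma sym2_spare {x : Sym2 V} (h : ¬ x.IsDiag) {v : V} (hv : v ∈ x) :
    ∃ w ∈ x, w ≠ v := by
  induction x using Sym2.inductionOn with
  | hf a b =>
    have hab : a ≠ b := by simpa [Sym2.mk_isDiag_iff] using h
    rcases Sym2.mem_iff.mp hv with rfl | rfl
    · exact ⟨b, Sym2.mem_mk_right _ _, hab.symm⟩
    · exact ⟨a, Sym2.mem_mk_left _ _, hab⟩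

lemma acyclic_of_mono (FE : Finset (Sym2 V)) (FA : Finset (V × V))
    (hFE : ∀ e ∈ FE, ¬ e.IsDiag)
    (hcov : ∀ v, edgeCoverCount FE v + arcCoverCount FA v ≤ 1)
    (f : V → ℕ) (hf : ∀ a ∈ FA, f a.1 < f a.2) :
    AcyclicEdgeMultiset (underlyingEdges FE FA) := by
  classical
  have hσinj : ∀ p ∈ FA, ∀ q ∈ FA, s(p.1, p.2) = s(q.1, q.2) → p = q := by
    intro p hp q hq hpq
    rcases Sym2.eq_iff.mp hpq with ⟨h1, h2⟩ | ⟨h1, h2⟩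
    · exact Prod.ext h1 h2
    · have h3 := hf p hp
      have h4 := hf q hq
      rw [h1, h2] at h3
      omega
  have hnodup : (underlyingEdges FE FA).Nodup := by
    unfold underlyingEdges
    rw [Multiset.nodup_add]
    refine ⟨FE.nodup, ?_, ?_⟩
    · exact Multiset.Nodup.map_on
        (fun p hp q hq => hσinj p (Finset.mem_val.mp hp) q (Finset.mem_val.mp hq)) FA.nodup
    · rw [Multiset.disjoint_left]
      intro e heFE hemap
      rcases Multiset.mem_map.mp hemap with ⟨p, hp, hpe⟩
      have h1 := edgeCount_pos (Finset.mem_val.mp heFE)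
        (show p.2 ∈ e by rw [← hpe]; exact Sym2.mem_mk_right _ _)
      have h2 := arcCount_pos (Finset.mem_val.mp hp)
      have := hcov p.2
      omega
  intro S hS hS0
  have hSnodup : S.Nodup := Multiset.nodup_of_le hS hnodup
  set F := S.toFinset with hF
  have hFcard : F.card = Multiset.card S := Multiset.toFinset_card_of_nodup hSnodup
  have hmemU : ∀ x ∈ F, x ∈ FE ∨ ∃ p, p ∈ FA ∧ s(p.1, p.2) = x := by
    intro x hx
    have hx2 : x ∈ underlyingEdges FE FA := Multiset.mem_of_le hS (Multiset.mem_toFinset.mp hx)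
    unfold underlyingEdges at hx2
    rcases Multiset.mem_add.mp hx2 with h | h
    · exact Or.inl (Finset.mem_val.mp h)
    · rcases Multiset.mem_map.mp h with ⟨p, hp, hpe⟩
      exact Or.inr ⟨p, Finset.mem_val.mp hp, hpe⟩
  set Φ : Sym2 V → V := fun x =>
    if h : ∃ p, p ∈ FA ∧ s(p.1, p.2) = x then h.choose.2 else (sym2_exists_mem x).choose with hΦ
  have harcΦ : ∀ x, (h : ∃ p, p ∈ FA ∧ s(p.1, p.2) = x) →
      ∃ p, p ∈ FA ∧ s(p.1, p.2) = x ∧ Φ x = p.2 := by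
    intro x h
    refine ⟨h.choose, h.choose_spec.1, h.choose_spec.2, ?_⟩
    simp only [hΦ]
    rw [dif_pos h]
  have hΦmem : ∀ x, Φ x ∈ x := by
    intro x
    by_cases h : ∃ p, p ∈ FA ∧ s(p.1, p.2) = x
    · obtain ⟨p, hp, hpx, hΦx⟩ := harcΦ x h
      rw [hΦx, ← hpx]
      exact Sym2.mem_mk_right _ _
    · simp only [hΦ]
      rw [dif_neg h]
      exact (sym2_exists_mem x).choose_spec
  -- status lemmas
  have hedge_type : ∀ x ∈ F, (¬ ∃ p, p ∈ FA ∧ s(p.1, p.2) = x) → x ∈ FE := by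
    intro x hx h
    rcases hmemU x hx with h1 | h1
    · exact h1
    · exact absurd h1 h
  have hinj : Set.InjOn Φ F := by
    intro x hx y hy hxy
    by_contra hne
    have hcount : ∀ z ∈ F, (1 ≤ arcCoverCount FA (Φ z)) ∨
        (z ∈ FE ∧ 1 ≤ edgeCoverCount FE (Φ z)) := by
      intro z hz
      by_cases h : ∃ p, p ∈ FA ∧ s(p.1, p.2) = z
      · obtain ⟨p, hp, hpz, hΦz⟩ := harcΦ z h
        exact Or.inl (hΦz ▸ arcCount_pos hp)
      · have hzFE := hedge_type z hz h
        exact Or.inr ⟨hzFE, edgeCount_pos hzFE (hΦmem z)⟩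
    have hcv := hcov (Φ x)
    by_cases hax : ∃ p, p ∈ FA ∧ s(p.1, p.2) = x
    · obtain ⟨p, hp, hpx, hΦx⟩ := harcΦ x hax
      by_cases hay : ∃ p, p ∈ FA ∧ s(p.1, p.2) = y
      · obtain ⟨q, hq, hqy, hΦy⟩ := harcΦ y hay
        have hpq : p ≠ q := fun h => hne (by rw [← hpx, ← hqy, h])
        have hq2 : q.2 = Φ x := by rw [hxy, hΦy]
        have h2 : 1 < arcCoverCount FA (Φ x) := by
          apply Finset.one_lt_card_iff.mpr
          exact ⟨p, q, Finset.mem_filter.mpr ⟨hp, by rw [hΦx]⟩,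
            Finset.mem_filter.mpr ⟨hq, hq2⟩, hpq⟩
        omega
      · have hyFE := hedge_type y hy hay
        have h1 : 1 ≤ arcCoverCount FA (Φ x) := hΦx ▸ arcCount_pos hp
        have h2 : 1 ≤ edgeCoverCount FE (Φ x) := by
          rw [hxy]; exact edgeCount_pos hyFE (hΦmem y)
        omega
    · have hxFE := hedge_type x hx hax
      by_cases hay : ∃ p, p ∈ FA ∧ s(p.1, p.2) = y
      · obtain ⟨q, hq, hqy, hΦy⟩ := harcΦ y hay
        have h1 : 1 ≤ arcCoverCount FA (Φ x) := by
          rw [hxy, hΦy]; exact arcCount_pos hq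
        have h2 : 1 ≤ edgeCoverCount FE (Φ x) := edgeCount_pos hxFE (hΦmem x)
        omega
      · have hyFE := hedge_type y hy hay
        have h2 : 1 < edgeCoverCount FE (Φ x) := by
          apply Finset.one_lt_card_iff.mpr
          exact ⟨x, y, Finset.mem_filter.mpr ⟨hxFE, hΦmem x⟩,
            Finset.mem_filter.mpr ⟨hyFE, hxy ▸ hΦmem y⟩, hne⟩
        omega
  have himage : ∀ v ∈ F.image Φ,
      v ∈ Finset.univ.filter (fun v : V => ∃ e ∈ S.toFinset, v ∈ e) := by
    intro v hv
    rcases Finset.mem_image.mp hv with ⟨x, hx, rfl⟩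
    exact Finset.mem_filter.mpr ⟨Finset.mem_univ _, ⟨x, hx, hΦmem x⟩⟩
  have hspare : ∃ w ∈ Finset.univ.filter (fun v : V => ∃ e ∈ S.toFinset, v ∈ e),
      w ∉ F.image Φ := by
    by_cases hEx : ∃ x ∈ F, ¬ ∃ p, p ∈ FA ∧ s(p.1, p.2) = x
    · obtain ⟨x₀, hx₀, hx₀e⟩ := hEx
      have hx₀FE := hedge_type x₀ hx₀ hx₀e
      obtain ⟨w, hwx₀, hwne⟩ := sym2_spare (hFE x₀ hx₀FE) (hΦmem x₀)
      refine ⟨w, Finset.mem_filter.mpr ⟨Finset.mem_univ _, ⟨x₀, hx₀, hwx₀⟩⟩, ?_⟩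
      intro hw
      rcases Finset.mem_image.mp hw with ⟨y, hy, hΦy⟩
      by_cases hay : ∃ p, p ∈ FA ∧ s(p.1, p.2) = y
      · obtain ⟨q, hq, hqy, hΦy'⟩ := harcΦ y hay
        have h1 : 1 ≤ arcCoverCount FA w := by rw [← hΦy, hΦy']; exact arcCount_pos hq
        have h2 : 1 ≤ edgeCoverCount FE w := edgeCount_pos hx₀FE hwx₀
        have := hcov w
        omega
      · have hyFE := hedge_type y hy hay
        by_cases hyx : y = x₀
        · exact hwne (by rw [← hΦy, hyx])
        · have h2 : 1 < edgeCoverCount FE w := by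
            apply Finset.one_lt_card_iff.mpr
            exact ⟨y, x₀, Finset.mem_filter.mpr ⟨hyFE, hΦy ▸ hΦmem y⟩,
              Finset.mem_filter.mpr ⟨hx₀FE, hwx₀⟩, hyx⟩
          have := hcov w
          omega
    · push_neg at hEx
      have hFne : F.Nonempty := by
        rcases Multiset.exists_mem_of_ne_zero hS0 with ⟨x, hx⟩
        exact ⟨x, Multiset.mem_toFinset.mpr hx⟩
      obtain ⟨x₀, hx₀, hmin⟩ := F.exists_min_image (fun x => f (Φ x)) hFne
      obtain ⟨p₀, hp₀, hpx₀, hΦx₀⟩ := harcΦ x₀ (hEx x₀ hx₀)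
      refine ⟨p₀.1, Finset.mem_filter.mpr ⟨Finset.mem_univ _,
        ⟨x₀, hx₀, by rw [← hpx₀]; exact Sym2.mem_mk_left _ _⟩⟩, ?_⟩
      intro hw
      rcases Finset.mem_image.mp hw with ⟨y, hy, hΦy⟩
      have h1 := hmin y hy
      have h2 := hf p₀ hp₀
      rw [hΦy, hΦx₀] at h1
      omega
  obtain ⟨w, hwW, hwni⟩ := hspare
  have h1 : F.card = (F.image Φ).card := (Finset.card_image_of_injOn hinj).symm
  have h2 : F.image Φ ⊆
      (Finset.univ.filter (fun v : V => ∃ e ∈ S.toFinset, v ∈ e)).erase w :=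
    fun v hv => Finset.mem_erase.mpr ⟨fun h => hwni (h ▸ hv), himage v hv⟩
  calc Multiset.card S = (F.image Φ).card := by rw [← hFcard, h1]
  _ ≤ ((Finset.univ.filter (fun v : V => ∃ e ∈ S.toFinset, v ∈ e)).erase w).card :=
      Finset.card_le_card h2
  _ < (Finset.univ.filter (fun v : V => ∃ e ∈ S.toFinset, v ∈ e)).card :=
      Finset.card_erase_lt_of_mem hwW

end ACY

section DAG

set_option linter.unusedSectionVars false

open Finset

lemma walk_arcset {FA : Finset (V × V)} {x y : V} (h : arcReach FA x y) :
    ∃ S : Finset (V × V), S ⊆ FA ∧ (∀ p ∈ S, p.1 = x ∨ ∃ q ∈ S, q.2 = p.1) ∧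
      (y = x ∨ ∃ q ∈ S, q.2 = y) := by
  induction h with
  | refl => exact ⟨∅, by simp, by simp, Or.inl rfl⟩
  | @tail b c hab hbc ih =>
    obtain ⟨S, hSsub, hSprop, hSend⟩ := ih
    refine ⟨insert (b, c) S, Finset.insert_subset hbc hSsub, ?_,
      Or.inr ⟨(b, c), Finset.mem_insert_self _ _, rfl⟩⟩
    intro p hp
    rcases Finset.mem_insert.mp hp with rfl | hp
    · rcases hSend with h | ⟨q, hq, hqb⟩
      · exact Or.inl h
      · exact Or.inr ⟨q, Finset.mem_insert_of_mem hq, hqb⟩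
    · rcases hSprop p hp with h | ⟨q, hq, hqp⟩
      · exact Or.inl h
      · exact Or.inr ⟨q, Finset.mem_insert_of_mem hq, hqp⟩

lemma no_dicycle {FE : Finset (Sym2 V)} {FA : Finset (V × V)}
    (hnd : ∀ p ∈ FA, p.1 ≠ p.2)
    (hacy : AcyclicEdgeMultiset (underlyingEdges FE FA)) :
    ∀ a ∈ FA, ¬ arcReach FA a.2 a.1 := by
  classical
  intro a ha hreach
  obtain ⟨S, hSsub, hSprop, hSend⟩ := walk_arcset hreach
  set T := insert a S with hT
  have hTsub : T ⊆ FA := Finset.insert_subset ha hSsub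
  have hheads : ∀ v, (∃ p ∈ T, v ∈ s(p.1, p.2)) → ∃ p ∈ T, p.2 = v := by
    rintro v ⟨p, hp, hv⟩
    rcases Sym2.mem_iff.mp hv with rfl | rfl
    · rcases Finset.mem_insert.mp hp with rfl | hpS
      · rcases hSend with h | ⟨q, hq, hqa⟩
        · exact absurd h (by intro hh; exact hnd p (hTsub hp) hh)
        · exact ⟨q, Finset.mem_insert_of_mem hq, hqa⟩
      · rcases hSprop p hpS with h | ⟨q, hq, hqp⟩
        · exact ⟨a, Finset.mem_insert_self _ _, h.symm⟩
        · exact ⟨q, Finset.mem_insert_of_mem hq, hqp⟩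
    · exact ⟨p, hp, rfl⟩
  set MS : Multiset (Sym2 V) := T.val.map (fun p => s(p.1, p.2)) with hMS
  have hle : MS ≤ underlyingEdges FE FA := by
    unfold underlyingEdges
    refine le_trans ?_ (Multiset.le_add_left _ _)
    exact Multiset.map_le_map (Finset.val_le_iff.mpr hTsub)
  have hne : MS ≠ 0 := by
    intro h
    have haT : a ∈ T := Finset.mem_insert_self _ _
    have hmm : s(a.1, a.2) ∈ MS := Multiset.mem_map_of_mem _ (Finset.mem_val.mpr haT)
    rw [h] at hmm
    simp at hmm
  have hcard := hacy MS hle hne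
  have hsub2 : (Finset.univ.filter (fun v : V => ∃ e ∈ MS.toFinset, v ∈ e))
      ⊆ T.image Prod.snd := by
    intro v hv
    obtain ⟨-, e, he, hve⟩ := Finset.mem_filter.mp hv
    rw [Multiset.mem_toFinset, hMS] at he
    obtain ⟨p, hp, hpe⟩ := Multiset.mem_map.mp he
    have hpT : p ∈ T := Finset.mem_val.mp hp
    obtain ⟨q, hq, hqv⟩ := hheads v ⟨p, hpT, hpe ▸ hve⟩
    exact Finset.mem_image.mpr ⟨q, hq, hqv⟩
  have h1 : Multiset.card MS = T.card := by
    rw [hMS, Multiset.card_map]; rfl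
  have h2 := Finset.card_le_card hsub2
  have h3 := Finset.card_image_le (s := T) (f := Prod.snd)
  omega

lemma exists_mono_f {FA : Finset (V × V)} (h : ∀ a ∈ FA, ¬ arcReach FA a.2 a.1) :
    ∃ f : V → ℕ, ∀ a ∈ FA, f a.1 < f a.2 := by
  refine ⟨fun v => {w | arcReach FA w v}.ncard, ?_⟩
  intro a ha
  apply Set.ncard_lt_ncard ?_ (Set.toFinite _)
  rw [Set.ssubset_def]
  constructor
  · intro w hw
    have hstep : (fun u v => (u, v) ∈ FA) a.1 a.2 := by simpa using ha
    exact Relation.ReflTransGen.tail hw hstep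
  · intro hsub
    have h1 : a.2 ∈ {w | arcReach FA w a.2} := Relation.ReflTransGen.refl
    exact h a ha (hsub h1)

end DAG

section PathBFS

set_option linter.unusedSectionVars false

open Finset

lemma exists_simple_path {r : V → V → Prop} {x y : V} (h : Relation.ReflTransGen r x y) :
    ∃ (m : ℕ) (vs : ℕ → V), vs 0 = x ∧ vs m = y ∧ (∀ i, i < m → r (vs i) (vs (i + 1))) ∧
      (∀ i, i ≤ m → ∀ j, j ≤ m → vs i = vs j → i = j) := by
  classical
  induction h with
  | refl => exact ⟨0, fun _ => x, rfl, rfl, by omega, by omega⟩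
  | @tail b c hxb hbc ih =>
    obtain ⟨m, vs, h0, hm, harc, hinj⟩ := ih
    by_cases hc : ∃ k, k ≤ m ∧ vs k = c
    · obtain ⟨k, hk, hvk⟩ := hc
      exact ⟨k, vs, h0, hvk, fun i hi => harc i (by omega),
        fun i hi j hj => hinj i (by omega) j (by omega)⟩
    · push_neg at hc
      refine ⟨m + 1, fun i => if i ≤ m then vs i else c, by simp [h0], by simp, ?_, ?_⟩
      · intro i hi
        by_cases him : i < m
        · simp only [if_pos (by omega : i ≤ m), if_pos (by omega : i + 1 ≤ m)]
          exact harc i him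
        · have hieq : i = m := by omega
          subst hieq
          simp only [if_pos le_rfl, if_neg (by omega : ¬ i + 1 ≤ i)]
          rw [hm]; exact hbc
      · intro i hi j hj hij
        by_cases him : i ≤ m <;> by_cases hjm : j ≤ m
        · simp only [if_pos him, if_pos hjm] at hij; exact hinj i him j hjm hij
        · simp only [if_pos him, if_neg hjm] at hij; exact absurd hij (hc i him)
        · simp only [if_neg him, if_pos hjm] at hij; exact absurd hij.symm (hc j hjm)
        · omega

lemma bfs_exists (X : Finset V) (CA : Finset (V × V))
    (hreach : ∀ v : V, ∃ x ∈ X, arcReach CA x v) :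
    ∃ (f : V → ℕ) (par : V → V × V),
      ∀ v, v ∉ X → par v ∈ CA ∧ (par v).2 = v ∧ f (par v).1 < f v := by
  classical
  let L : ℕ → Set V := fun k => Nat.rec (↑X) (fun _ s => s ∪ {v | ∃ u ∈ s, (u, v) ∈ CA}) k
  have hL0 : L 0 = ↑X := rfl
  have hLsucc : ∀ k, L (k + 1) = L k ∪ {v | ∃ u ∈ L k, (u, v) ∈ CA} := fun _ => rfl
  have hex : ∀ v, ∃ k, v ∈ L k := by
    intro v
    obtain ⟨x, hx, hr⟩ := hreach v
    clear hreach
    induction hr with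
    | refl => exact ⟨0, hx⟩
    | @tail b c hab hbc ih =>
      obtain ⟨k, hk⟩ := ih
      exact ⟨k + 1, by rw [hLsucc]; exact Or.inr ⟨b, hk, hbc⟩⟩
  set f : V → ℕ := fun v => sInf {k | v ∈ L k} with hf
  have hfmem : ∀ v, v ∈ L (f v) := fun v => Nat.sInf_mem (hex v)
  have hfmin : ∀ v k, k < f v → v ∉ L k := fun v k hk => Nat.notMem_of_lt_sInf hk
  have hkey : ∀ v, v ∉ X → ∃ u, (u ∈ L (f v - 1) ∧ (u, v) ∈ CA) ∧ f u < f v := by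
    intro v hv
    have hf0 : f v ≠ 0 := by
      intro h
      have := hfmem v
      rw [h, hL0] at this
      exact hv this
    have h1 : v ∈ L (f v - 1 + 1) := by
      have : f v - 1 + 1 = f v := by omega
      rw [this]; exact hfmem v
    rw [hLsucc] at h1
    rcases h1 with h1 | ⟨u, hu, huv⟩
    · exact absurd h1 (hfmin v (f v - 1) (by omega))
    · refine ⟨u, ⟨hu, huv⟩, ?_⟩
      have : f u ≤ f v - 1 := Nat.sInf_le hu
      omega
  letI : ∀ v, Decidable (∃ u, (u ∈ L (f v - 1) ∧ (u, v) ∈ CA) ∧ f u < f v) :=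
    fun _ => Classical.propDecidable _
  refine ⟨f, fun v => if h : ∃ u, (u ∈ L (f v - 1) ∧ (u, v) ∈ CA) ∧ f u < f v
      then (h.choose, v) else (v, v), ?_⟩
  intro v hv
  simp only
  rw [dif_pos (hkey v hv)]
  obtain ⟨⟨hu1, hu2⟩, hu3⟩ := (hkey v hv).choose_spec
  exact ⟨hu2, rfl, hu3⟩

lemma exists_matching (N : ℕ) : ∀ (CE : Finset (Sym2 V)), CE.card ≤ N →
    (∀ e ∈ CE, ¬ e.IsDiag) →
    ∃ ME, ME ⊆ CE ∧ (∀ v, edgeCoverCount ME v ≤ 1) ∧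
      (Finset.univ.filter (fun v => 0 < edgeCoverCount CE v)).card ≤ ME.card + CE.card := by
  classical
  induction N with
  | zero =>
    intro CE hcard _
    have : CE = ∅ := Finset.card_eq_zero.mp (by omega)
    subst this
    refine ⟨∅, Finset.Subset.refl _, by intro v; simp [edgeCoverCount], ?_⟩
    have : Finset.univ.filter (fun v : V => 0 < edgeCoverCount (∅ : Finset (Sym2 V)) v) = ∅ := by
      ext v; simp [edgeCoverCount]
    simp [this]
  | succ N ih =>
    intro CE hcard hnd
    rcases CE.eq_empty_or_nonempty with rfl | ⟨e, he⟩
    · refine ⟨∅, Finset.Subset.refl _, by intro v; simp [edgeCoverCount], ?_⟩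
      have : Finset.univ.filter (fun v : V => 0 < edgeCoverCount (∅ : Finset (Sym2 V)) v) = ∅ := by
        ext v; simp [edgeCoverCount]
      simp [this]
    · obtain ⟨a, ha⟩ := sym2_exists_mem e
      set b := Sym2.Mem.other' ha with hb
      have hab_e : s(a, b) = e := Sym2.other_spec' ha
      have hbmem : b ∈ e := by rw [← hab_e]; exact Sym2.mem_mk_right _ _
      have hab : a ≠ b := by
        intro h
        apply hnd e he
        rw [← hab_e, ← h]
        exact Sym2.mk_isDiag_iff.mpr rfl
      set T := CE.filter (fun e' => a ∈ e' ∨ b ∈ e') with hT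
      have heT : e ∈ T := Finset.mem_filter.mpr ⟨he, Or.inl ha⟩
      set CE' := CE \ T with hCE'
      have hTsub : T ⊆ CE := Finset.filter_subset _ _
      have hcard' : CE'.card ≤ N := by
        have h1 : CE'.card = CE.card - T.card := Finset.card_sdiff_of_subset hTsub
        have h2 : 1 ≤ T.card := Finset.card_pos.mpr ⟨e, heT⟩
        have h3 := Finset.card_le_card hTsub
        omega
      obtain ⟨ME', hsub', hmat', hbound'⟩ := ih CE' hcard'
        (fun e' he' => hnd e' (Finset.mem_sdiff.mp he').1)
      have heCE' : e ∉ CE' := fun h => (Finset.mem_sdiff.mp h).2 heT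
      have heME' : e ∉ ME' := fun h => heCE' (hsub' h)
      have hME'ab : ∀ e' ∈ ME', a ∉ e' ∧ b ∉ e' := by
        intro e' he'
        have h1 := Finset.mem_sdiff.mp (hsub' he')
        constructor <;> intro h <;> exact h1.2 (Finset.mem_filter.mpr ⟨h1.1, by tauto⟩)
      refine ⟨insert e ME', ?_, ?_, ?_⟩
      · exact Finset.insert_subset he (hsub'.trans (Finset.sdiff_subset))
      · intro v
        unfold edgeCoverCount
        rw [Finset.filter_insert]
        by_cases hv : v ∈ e
        · rw [if_pos hv, Finset.card_insert_of_notMem (fun h => heME' (Finset.mem_filter.mp h).1)]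
          have : (ME'.filter (fun e' => v ∈ e')).card = 0 := by
            rw [Finset.card_eq_zero]
            rw [Finset.filter_eq_empty_iff]
            intro e' he'
            have hv2 : v = a ∨ v = b := by
              rw [← hab_e] at hv
              exact Sym2.mem_iff.mp hv
            obtain ⟨h1, h2⟩ := hME'ab e' he'
            rcases hv2 with rfl | rfl
            · exact h1
            · exact h2
          omega
        · rw [if_neg hv]
          exact hmat' v
      · -- cardinality bound
        set oe : Sym2 V → V := fun x =>
          if h : a ∈ x then Sym2.Mem.other' h else if h : b ∈ x then Sym2.Mem.other' h else a
          with hoe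
        have hXsub : Finset.univ.filter (fun v => 0 < edgeCoverCount CE v) ⊆
            (Finset.univ.filter (fun v => 0 < edgeCoverCount CE' v)) ∪
              insert a (insert b ((T.erase e).image oe)) := by
          intro v hv
          have hv1 : 0 < edgeCoverCount CE v := (Finset.mem_filter.mp hv).2
          obtain ⟨e₁, he₁⟩ := Finset.card_pos.mp hv1
          obtain ⟨he₁CE, hve₁⟩ := Finset.mem_filter.mp he₁
          by_cases he₁' : e₁ ∈ CE'
          · exact Finset.mem_union_left _ (Finset.mem_filter.mpr ⟨Finset.mem_univ _,
              Finset.card_pos.mpr ⟨e₁, Finset.mem_filter.mpr ⟨he₁', hve₁⟩⟩⟩)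
          · have he₁T : e₁ ∈ T := by
              by_contra h
              exact he₁' (Finset.mem_sdiff.mpr ⟨he₁CE, h⟩)
            apply Finset.mem_union_right
            by_cases hva : v = a
            · exact hva ▸ Finset.mem_insert_self _ _
            · by_cases hvb : v = b
              · exact Finset.mem_insert_of_mem (hvb ▸ Finset.mem_insert_self _ _)
              · apply Finset.mem_insert_of_mem
                apply Finset.mem_insert_of_mem
                have he₁e : e₁ ≠ e := by
                  intro h
                  subst h
                  rw [← hab_e] at hve₁
                  rcases Sym2.mem_iff.mp hve₁ with h | h
                  · exact hva h
                  · exact hvb h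
                apply Finset.mem_image.mpr
                refine ⟨e₁, Finset.mem_erase.mpr ⟨he₁e, he₁T⟩, ?_⟩
                have hTmem := (Finset.mem_filter.mp he₁T).2
                simp only [hoe]
                by_cases hae₁ : a ∈ e₁
                · rw [dif_pos hae₁]
                  have hspec : s(a, Sym2.Mem.other' hae₁) = e₁ := Sym2.other_spec' hae₁
                  rw [← hspec] at hve₁
                  rcases Sym2.mem_iff.mp hve₁ with h | h
                  · exact absurd h hva
                  · exact h.symm
                · rw [dif_neg hae₁]
                  have hbe₁ : b ∈ e₁ := by tauto
                  rw [dif_pos hbe₁]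
                  have hspec : s(b, Sym2.Mem.other' hbe₁) = e₁ := Sym2.other_spec' hbe₁
                  rw [← hspec] at hve₁
                  rcases Sym2.mem_iff.mp hve₁ with h | h
                  · exact absurd h hvb
                  · exact h.symm
        have h1 := Finset.card_le_card hXsub
        have h2 := Finset.card_union_le
          (Finset.univ.filter (fun v => 0 < edgeCoverCount CE' v))
          (insert a (insert b ((T.erase e).image oe)))
        have h3 : (insert a (insert b ((T.erase e).image oe))).card ≤
            2 + (T.erase e).card := by
          have := Finset.card_insert_le a (insert b ((T.erase e).image oe))
          have := Finset.card_insert_le b ((T.erase e).image oe)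
          have := Finset.card_image_le (s := T.erase e) (f := oe)
          omega
        have h4 : (T.erase e).card = T.card - 1 := Finset.card_erase_of_mem heT
        have h5 : CE'.card = CE.card - T.card := Finset.card_sdiff_of_subset hTsub
        have h6 : 1 ≤ T.card := Finset.card_pos.mpr ⟨e, heT⟩
        have h7 := Finset.card_le_card hTsub
        have h8 : (insert e ME').card = ME'.card + 1 := Finset.card_insert_of_notMem heME'
        omega

end PathBFS

section Soft

set_option linter.unusedSectionVars false

open Finset

lemma forest_count (ME : Finset (Sym2 V)) (MA : Finset (V × V))
    (hnd : ∀ e ∈ ME, ¬ e.IsDiag)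
    (hcov : ∀ v, edgeCoverCount ME v + arcCoverCount MA v ≤ 1) :
    2 * ME.card + MA.card + (Finset.univ.filter
      (fun v => edgeCoverCount ME v + arcCoverCount MA v = 0)).card = Fintype.card V := by
  have h1 := edge_card_eq_sum ME hnd
  have h2 := arc_card_eq_sum MA
  have h3 : 2 * ME.card + MA.card = ∑ v, (edgeCoverCount ME v + arcCoverCount MA v) := by
    rw [Finset.sum_add_distrib, ← h1, ← h2]
  have h4 : ∑ v, (edgeCoverCount ME v + arcCoverCount MA v) =
      (Finset.univ.filter
        (fun v => ¬ (edgeCoverCount ME v + arcCoverCount MA v = 0))).card := by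
    rw [← Finset.sum_filter_add_sum_filter_not Finset.univ
      (fun v => edgeCoverCount ME v + arcCoverCount MA v = 0)]
    have e1 : ∑ v ∈ Finset.univ.filter
        (fun v => edgeCoverCount ME v + arcCoverCount MA v = 0),
        (edgeCoverCount ME v + arcCoverCount MA v) = 0 := by
      apply Finset.sum_eq_zero
      intro v hv
      exact (Finset.mem_filter.mp hv).2
    have e2 : ∑ v ∈ Finset.univ.filter
        (fun v => ¬ (edgeCoverCount ME v + arcCoverCount MA v = 0)),
        (edgeCoverCount ME v + arcCoverCount MA v)
        = (Finset.univ.filter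
          (fun v => ¬ (edgeCoverCount ME v + arcCoverCount MA v = 0))).card := by
      rw [Finset.card_eq_sum_ones]
      apply Finset.sum_congr rfl
      intro v hv
      have hv2 := (Finset.mem_filter.mp hv).2
      have := hcov v
      omega
    rw [e1, e2]
    omega
  have h5 := Finset.card_filter_add_card_filter_not (s := Finset.univ)
    (p := fun v => edgeCoverCount ME v + arcCoverCount MA v = 0)
  rw [Finset.card_univ] at h5
  omega

lemma soft_direction (E : Finset (Sym2 V)) (A : Finset (V × V))
    (hE : ∀ e ∈ E, ¬ e.IsDiag)
    (CE : Finset (Sym2 V)) (CA : Finset (V × V)) (hCE : CE ⊆ E) (hCA : CA ⊆ A)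
    (hc : IsMixedEdgeCover CE CA) :
    ∃ FE FA, FE ⊆ E ∧ FA ⊆ A ∧ IsMatchingForest FE FA ∧
      (Fintype.card V : ℚ) ≤ mixSize FE FA + mixSize CE CA := by
  classical
  set X := Finset.univ.filter (fun v => 0 < edgeCoverCount CE v) with hX
  have hreach : ∀ v : V, ∃ x ∈ X, arcReach CA x v := by
    intro v
    obtain ⟨u, ⟨e, he, hue⟩, hr⟩ := hc v
    exact ⟨u, Finset.mem_filter.mpr ⟨Finset.mem_univ _, edgeCount_pos he hue⟩, hr⟩
  obtain ⟨f, par, hpar⟩ := bfs_exists X CA hreach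
  set B := (Finset.univ.filter (fun v => v ∉ X)).image par with hB
  have hBsub : B ⊆ CA := by
    intro p hp
    obtain ⟨v, hv, rfl⟩ := Finset.mem_image.mp hp
    exact (hpar v (Finset.mem_filter.mp hv).2).1
  have hBcount1 : ∀ v, v ∉ X → arcCoverCount B v = 1 := by
    intro v hv
    have : B.filter (fun p => p.2 = v) = {par v} := by
      ext p
      simp only [Finset.mem_filter, Finset.mem_singleton]
      constructor
      · rintro ⟨hp, hp2⟩
        obtain ⟨w, hw, rfl⟩ := Finset.mem_image.mp hp
        have hw2 := (hpar w (Finset.mem_filter.mp hw).2).2.1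
        rw [hw2] at hp2
        rw [hp2]
      · rintro rfl
        refine ⟨Finset.mem_image.mpr ⟨v, Finset.mem_filter.mpr ⟨Finset.mem_univ _, hv⟩, rfl⟩,
          (hpar v hv).2.1⟩
    unfold arcCoverCount
    rw [this, Finset.card_singleton]
  have hBcount0 : ∀ v, v ∈ X → arcCoverCount B v = 0 := by
    intro v hv
    unfold arcCoverCount
    rw [Finset.card_eq_zero, Finset.filter_eq_empty_iff]
    intro p hp
    obtain ⟨w, hw, rfl⟩ := Finset.mem_image.mp hp
    have hwX := (Finset.mem_filter.mp hw).2
    have hw2 := (hpar w hwX).2.1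
    rw [hw2]
    intro h
    rw [h] at hwX
    exact hwX hv
  have hXcard : X.card ≤ Fintype.card V := by
    rw [← Finset.card_univ]; exact Finset.card_le_card (Finset.subset_univ _)
  have hBcard : B.card = Fintype.card V - X.card := by
    rw [hB, Finset.card_image_of_injOn]
    · have : Finset.univ.filter (fun v => v ∉ X) = Finset.univ \ X := by
        ext v; simp
      rw [this, Finset.card_sdiff_of_subset (Finset.subset_univ _), Finset.card_univ]
    · intro w₁ hw₁ w₂ hw₂ heq
      have h1 := (hpar w₁ (Finset.mem_filter.mp hw₁).2).2.1
      have h2 := (hpar w₂ (Finset.mem_filter.mp hw₂).2).2.1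
      rw [← h1, ← h2, heq]
  obtain ⟨ME, hMEsub, hMEmat, hMEbound⟩ :=
    exists_matching CE.card CE le_rfl (fun e he => hE e (hCE he))
  have hMEX : ∀ v, v ∉ X → edgeCoverCount ME v = 0 := by
    intro v hv
    unfold edgeCoverCount
    rw [Finset.card_eq_zero, Finset.filter_eq_empty_iff]
    intro e he hve
    exact hv (Finset.mem_filter.mpr ⟨Finset.mem_univ _,
      edgeCount_pos (hMEsub he) hve⟩)
  have hcov1 : ∀ v, edgeCoverCount ME v + arcCoverCount B v ≤ 1 := by
    intro v
    by_cases hv : v ∈ X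
    · rw [hBcount0 v hv]
      have := hMEmat v
      omega
    · rw [hMEX v hv, hBcount1 v hv]
  have hfB : ∀ p ∈ B, f p.1 < f p.2 := by
    intro p hp
    obtain ⟨w, hw, rfl⟩ := Finset.mem_image.mp hp
    have h1 := hpar w (Finset.mem_filter.mp hw).2
    rw [h1.2.1]
    exact h1.2.2
  refine ⟨ME, B, hMEsub.trans hCE, hBsub.trans hCA,
    ⟨acyclic_of_mono _ _ (fun e he => hE e (hCE (hMEsub he))) hcov1 f hfB, hcov1⟩, ?_⟩
  unfold mixSize
  have c1 : (X.card : ℚ) ≤ ME.card + CE.card := by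
    exact_mod_cast hMEbound
  have c2 : (B.card : ℚ) = (Fintype.card V : ℚ) - X.card := by
    rw [hBcard]
    push_cast [Nat.cast_sub hXcard]
    ring
  have c3 : (Fintype.card V : ℚ) - X.card ≤ CA.card := by
    rw [← c2]
    exact_mod_cast Finset.card_le_card hBsub
  linarith

end Soft

section Move

set_option linter.unusedSectionVars false

open Finset

lemma rewire (E : Finset (Sym2 V)) (A : Finset (V × V))
    (hE : ∀ e ∈ E, ¬ e.IsDiag) (hA : ∀ a ∈ A, a.1 ≠ a.2)
    (ME : Finset (Sym2 V)) (MA : Finset (V × V)) (hme : ME ⊆ E) (hma : MA ⊆ A)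
    (hforest : IsMatchingForest ME MA)
    (m : ℕ) (hm : 1 ≤ m) (vs : ℕ → V)
    (harc : ∀ i, i < m → (vs i, vs (i + 1)) ∈ A)
    (hinj : ∀ i, i ≤ m → ∀ j, j ≤ m → vs i = vs j → i = j)
    (hint : ∀ i, 1 ≤ i → i < m → arcCoverCount MA (vs i) = 1)
    (hu : edgeCoverCount ME (vs m) = 0) (hu2 : arcCoverCount MA (vs m) = 0) :
    ∃ MA', MA' ⊆ A ∧ IsMatchingForest ME MA' ∧
      MA'.card + arcCoverCount MA (vs 0) = MA.card + 1 ∧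
      (∀ v, edgeCoverCount ME v + arcCoverCount MA' v = 0 ↔
        ((v = vs 0 ∧ edgeCoverCount ME v = 0) ∨
         (edgeCoverCount ME v + arcCoverCount MA v = 0 ∧ v ≠ vs m))) := by
  classical
  obtain ⟨hacy, hcov⟩ := hforest
  obtain ⟨f, hf⟩ := exists_mono_f (no_dicycle (fun p hp => hA p (hma hp)) hacy)
  set Padd := (Finset.range m).image (fun i => (vs i, vs (i + 1))) with hPadd
  set keep := MA.filter (fun p => ∀ i, i < m → p.2 ≠ vs i) with hkeep
  set MA' := keep ∪ Padd with hMA'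
  have hPaddA : Padd ⊆ A := by
    intro p hp
    obtain ⟨i, hi, rfl⟩ := Finset.mem_image.mp hp
    exact harc i (Finset.mem_range.mp hi)
  have hkeepMA : keep ⊆ MA := Finset.filter_subset _ _
  have hMA'A : MA' ⊆ A := Finset.union_subset (hkeepMA.trans hma) hPaddA
  have hneq : ∀ i, i ≤ m → ∀ j, j ≤ m → i ≠ j → vs i ≠ vs j := by
    intro i hi j hj hij h
    exact hij (hinj i hi j hj h)
  have hvm_nokeep : ∀ p ∈ MA, p.2 ≠ vs m := by
    intro p hp h
    have := arcCount_pos hp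
    rw [h] at this
    omega
  have hdisj : Disjoint keep Padd := by
    rw [Finset.disjoint_left]
    intro p hpk hpP
    obtain ⟨i, hi, rfl⟩ := Finset.mem_image.mp hpP
    rw [Finset.mem_range] at hi
    obtain ⟨hpMA, hpcond⟩ := Finset.mem_filter.mp hpk
    by_cases him : i + 1 < m
    · exact hpcond (i + 1) him rfl
    · have : i + 1 = m := by omega
      exact hvm_nokeep _ hpMA (by rw [this])
  -- counts for Padd
  have hPcnt1 : ∀ k, 1 ≤ k → k ≤ m → arcCoverCount Padd (vs k) = 1 := by
    intro k hk1 hkm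
    have : Padd.filter (fun p => p.2 = vs k) = {(vs (k - 1), vs k)} := by
      ext p
      simp only [Finset.mem_filter, Finset.mem_singleton]
      constructor
      · rintro ⟨hp, hp2⟩
        obtain ⟨i, hi, rfl⟩ := Finset.mem_image.mp hp
        rw [Finset.mem_range] at hi
        have hik : i + 1 = k := hinj (i + 1) (by omega) k hkm hp2
        subst hik
        rfl
      · rintro rfl
        refine ⟨Finset.mem_image.mpr ⟨k - 1, Finset.mem_range.mpr (by omega), ?_⟩, rfl⟩
        congr 2
        omega
    unfold arcCoverCount
    rw [this, Finset.card_singleton]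
  have hPcnt0 : ∀ v, (∀ k, 1 ≤ k → k ≤ m → v ≠ vs k) → arcCoverCount Padd v = 0 := by
    intro v hv
    unfold arcCoverCount
    rw [Finset.card_eq_zero, Finset.filter_eq_empty_iff]
    intro p hp
    obtain ⟨i, hi, rfl⟩ := Finset.mem_image.mp hp
    rw [Finset.mem_range] at hi
    exact fun h => hv (i + 1) (by omega) (by omega) h.symm
  -- counts for keep
  have hkcnt0 : ∀ i, i < m → arcCoverCount keep (vs i) = 0 := by
    intro i hi
    unfold arcCoverCount
    rw [Finset.card_eq_zero, Finset.filter_eq_empty_iff]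
    intro p hp
    exact (Finset.mem_filter.mp hp).2 i hi
  have hkcntm : arcCoverCount keep (vs m) = 0 := by
    unfold arcCoverCount
    rw [Finset.card_eq_zero, Finset.filter_eq_empty_iff]
    intro p hp h
    exact hvm_nokeep p (hkeepMA hp) h
  have hkcoff : ∀ v, (∀ i, i < m → v ≠ vs i) → arcCoverCount keep v = arcCoverCount MA v := by
    intro v hv
    unfold arcCoverCount
    congr 1
    rw [hkeep, Finset.filter_filter]
    apply Finset.filter_congr
    intro p hp
    constructor
    · tauto
    · intro hp2
      exact ⟨fun i hi h => hv i hi (by rw [← hp2, h]), hp2⟩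
  have hcnt : ∀ v, arcCoverCount MA' v = arcCoverCount keep v + arcCoverCount Padd v := by
    intro v
    unfold arcCoverCount
    rw [hMA', Finset.filter_union]
    exact Finset.card_union_of_disjoint
      (Finset.disjoint_filter_filter hdisj)
  -- cover bound
  have hcov' : ∀ v, edgeCoverCount ME v + arcCoverCount MA' v ≤ 1 := by
    intro v
    rw [hcnt]
    by_cases hvp : ∃ k, k ≤ m ∧ vs k = v
    · obtain ⟨k, hkm, rfl⟩ := hvp
      by_cases hk0 : k = 0
      · subst hk0
        rw [hkcnt0 0 (by omega), hPcnt0 (vs 0) (fun k' hk1 hk2 => hneq 0 (by omega) k' hk2 (by omega))]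
        have := hcov (vs 0)
        omega
      · rw [hPcnt1 k (by omega) hkm]
        have hkeep0 : arcCoverCount keep (vs k) = 0 := by
          by_cases hkm' : k = m
          · subst hkm'; exact hkcntm
          · exact hkcnt0 k (by omega)
        rw [hkeep0]
        have hedge0 : edgeCoverCount ME (vs k) = 0 := by
          by_cases hkm' : k = m
          · subst hkm'; exact hu
          · have := hint k (by omega) (by omega)
            have := hcov (vs k)
            omega
        omega
    · push_neg at hvp
      rw [hkcoff v (fun i hi h => hvp i (by omega) h.symm),
        hPcnt0 v (fun k hk1 hk2 h => hvp k hk2 h.symm)]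
      exact hcov v
  -- acyclicity
  have hforest' : IsMatchingForest ME MA' := by
    set f' : V → ℕ := fun v => if h : ∃ i, i ≤ m ∧ vs i = v then sInf {i | i ≤ m ∧ vs i = v}
      else m + 1 + f v with hf'
    have hfidx : ∀ k, k ≤ m → f' (vs k) = k := by
      intro k hk
      have hex : ∃ i, i ≤ m ∧ vs i = vs k := ⟨k, hk, rfl⟩
      simp only [hf']
      rw [dif_pos hex]
      have h1 : sInf {i | i ≤ m ∧ vs i = vs k} ∈ {i | i ≤ m ∧ vs i = vs k} :=
        Nat.sInf_mem hex
      exact hinj _ h1.1 k hk h1.2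
    have hfoff : ∀ v, (∀ i, i ≤ m → vs i ≠ v) → f' v = m + 1 + f v := by
      intro v hv
      simp only [hf']
      rw [dif_neg]
      rintro ⟨i, hi, h⟩
      exact hv i hi h
    have hfmono : ∀ p ∈ MA', f' p.1 < f' p.2 := by
      intro p hp
      rcases Finset.mem_union.mp hp with hpk | hpP
      · obtain ⟨hpMA, hpcond⟩ := Finset.mem_filter.mp hpk
        have h2 : f' p.2 = m + 1 + f p.2 := by
          apply hfoff
          intro i hi h
          by_cases him : i < m
          · exact hpcond i him h.symm
          · have : i = m := by omega
            exact hvm_nokeep p hpMA (by rw [← h, this])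
        rw [h2]
        by_cases h1 : ∃ i, i ≤ m ∧ vs i = p.1
        · obtain ⟨i, hi, hvi⟩ := h1
          rw [← hvi, hfidx i hi]
          omega
        · push_neg at h1
          rw [hfoff p.1 h1]
          have := hf p hpMA
          omega
      · obtain ⟨i, hi, rfl⟩ := Finset.mem_image.mp hpP
        rw [Finset.mem_range] at hi
        simp only
        rw [hfidx i (by omega), hfidx (i + 1) (by omega)]
        omega
    exact ⟨acyclic_of_mono ME MA' (fun e he => hE e (hme he)) hcov' f' hfmono, hcov'⟩
  -- cardinality
  have hPaddcard : Padd.card = m := by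
    rw [hPadd, Finset.card_image_of_injOn, Finset.card_range]
    intro i hi j hj h
    rw [Finset.mem_coe, Finset.mem_range] at hi hj
    exact hinj i (by omega) j (by omega) (congrArg Prod.fst h)
  have hdropped : (MA.filter (fun p => ¬ ∀ i, i < m → p.2 ≠ vs i)).card
      = arcCoverCount MA (vs 0) + (m - 1) := by
    have heq : MA.filter (fun p => ¬ ∀ i, i < m → p.2 ≠ vs i)
        = (Finset.range m).biUnion (fun i => MA.filter (fun p => p.2 = vs i)) := by
      ext p
      simp only [Finset.mem_filter, Finset.mem_biUnion, Finset.mem_range]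
      constructor
      · rintro ⟨hp, hcond⟩
        push_neg at hcond
        obtain ⟨i, hi, h⟩ := hcond
        exact ⟨i, hi, hp, h⟩
      · rintro ⟨i, hi, hp, h⟩
        refine ⟨hp, ?_⟩
        push_neg
        exact ⟨i, hi, h⟩
    rw [heq, Finset.card_biUnion]
    · have hsum : ∑ i ∈ Finset.range m, (MA.filter (fun p => p.2 = vs i)).card
          = ∑ i ∈ Finset.range m, arcCoverCount MA (vs i) := rfl
      rw [hsum]
      have hm' : m = (m - 1) + 1 := by omega
      rw [hm', Finset.sum_range_succ']
      have : ∑ i ∈ Finset.range (m - 1), arcCoverCount MA (vs (i + 1)) = m - 1 := by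
        rw [Finset.sum_congr rfl (fun i hi => hint (i + 1) (by omega)
          (by rw [Finset.mem_range] at hi; omega))]
        simp
      rw [this]
      omega
    · intro i hi j hj hij
      rw [Finset.mem_coe, Finset.mem_range] at hi hj
      apply Finset.disjoint_filter.mpr
      intro p hp h1 h2
      exact hneq i (by omega) j (by omega) hij (by rw [← h1, ← h2])
  have hkeepcard := Finset.card_filter_add_card_filter_not
    (s := MA) (p := fun p => ∀ i, i < m → p.2 ≠ vs i)
  rw [← hkeep] at hkeepcard
  have hMA'card : MA'.card = keep.card + m := by
    rw [hMA', Finset.card_union_of_disjoint hdisj, hPaddcard]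
  refine ⟨MA', hMA'A, hforest', by omega, ?_⟩
  intro v
  rw [hcnt]
  by_cases hvp : ∃ k, k ≤ m ∧ vs k = v
  · obtain ⟨k, hkm, rfl⟩ := hvp
    by_cases hk0 : k = 0
    · subst hk0
      rw [hkcnt0 0 (by omega),
        hPcnt0 (vs 0) (fun k' hk1 hk2 => hneq 0 (by omega) k' hk2 (by omega))]
      constructor
      · intro h
        exact Or.inl ⟨rfl, by omega⟩
      · rintro (⟨-, h⟩ | ⟨h, -⟩) <;> omega
    · have hkeep0 : arcCoverCount keep (vs k) = 0 := by
        by_cases hkm' : k = m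
        · subst hkm'; exact hkcntm
        · exact hkcnt0 k (by omega)
      rw [hkeep0, hPcnt1 k (by omega) hkm]
      constructor
      · intro h; omega
      · rintro (⟨h, -⟩ | ⟨hcc, hne⟩)
        · exact absurd (hinj k hkm 0 (by omega) h) hk0
        · by_cases hkm' : k = m
          · exact absurd (by rw [hkm']) hne
          · have := hint k (by omega) (by omega)
            omega
  · push_neg at hvp
    rw [hkcoff v (fun i hi h => hvp i (by omega) h.symm),
      hPcnt0 v (fun k hk1 hk2 h => hvp k hk2 h.symm)]
    constructor
    · intro h
      exact Or.inr ⟨h, fun hh => hvp m (le_refl m) hh.symm⟩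
    · rintro (⟨h, -⟩ | ⟨h, -⟩)
      · exact absurd h.symm (hvp 0 (by omega))
      · exact h

end Move

section Hard

set_option linter.unusedSectionVars false

open Finset

lemma hard_direction (E : Finset (Sym2 V)) (A : Finset (V × V))
    (hE : ∀ e ∈ E, ¬ e.IsDiag) (hA : ∀ a ∈ A, a.1 ≠ a.2)
    (hcov : ∃ FE FA, FE ⊆ E ∧ FA ⊆ A ∧ IsMixedEdgeCover FE FA)
    (ν : ℚ)
    (hmax : ∀ FE FA, FE ⊆ E → FA ⊆ A → IsMatchingForest FE FA → mixSize FE FA ≤ ν) :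
    ∀ (k : ℕ) (ME : Finset (Sym2 V)) (MA : Finset (V × V)), ME ⊆ E → MA ⊆ A →
      IsMatchingForest ME MA → mixSize ME MA = ν →
      (Finset.univ.filter (fun v => (edgeCoverCount ME v + arcCoverCount MA v = 0) ∧
        ∀ e ∈ E, v ∉ e)).card = k →
      ∃ CE CA, CE ⊆ E ∧ CA ⊆ A ∧ IsMixedEdgeCover CE CA ∧
        mixSize CE CA + ν ≤ (Fintype.card V : ℚ) := by
  classical
  intro k
  induction k using Nat.strong_induction_on with
  | _ k ih =>
  intro ME MA hme hma hforest hsize hbad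
  by_cases hk : k = 0
  · -- no bad vertices: build the cover directly
    subst hk
    have hbad' : ∀ v, edgeCoverCount ME v + arcCoverCount MA v = 0 → ∃ e, e ∈ E ∧ v ∈ e := by
      intro v hv
      by_contra h
      push_neg at h
      have : v ∈ Finset.univ.filter (fun v => (edgeCoverCount ME v + arcCoverCount MA v = 0) ∧
          ∀ e ∈ E, v ∉ e) := Finset.mem_filter.mpr ⟨Finset.mem_univ _, hv, h⟩
      rw [Finset.card_eq_zero] at hbad
      rw [hbad] at this
      exact absurd this (Finset.notMem_empty v)
    set U := Finset.univ.filter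
      (fun v => edgeCoverCount ME v + arcCoverCount MA v = 0) with hU
    set φ : V → Sym2 V := fun v => if h : ∃ e, e ∈ E ∧ v ∈ e then h.choose else s(v, v) with hφ
    have hφspec : ∀ v ∈ U, φ v ∈ E ∧ v ∈ φ v := by
      intro v hv
      have h := hbad' v (Finset.mem_filter.mp hv).2
      simp only [hφ]
      rw [dif_pos h]
      exact h.choose_spec
    set CE := ME ∪ U.image φ with hCE
    have hCEsub : CE ⊆ E := by
      apply Finset.union_subset hme
      intro e he
      obtain ⟨v, hv, rfl⟩ := Finset.mem_image.mp he
      exact (hφspec v hv).1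
    obtain ⟨f, hf⟩ := exists_mono_f (no_dicycle (fun p hp => hA p (hma hp)) hforest.1)
    have hcover : IsMixedEdgeCover CE MA := by
      have hgen : ∀ N v, f v < N → ∃ u, (∃ e ∈ CE, u ∈ e) ∧ arcReach MA u v := by
        intro N
        induction N with
        | zero => intro v hv; omega
        | succ N ihN =>
          intro v hv
          by_cases h1 : 0 < edgeCoverCount ME v
          · obtain ⟨e, he⟩ := Finset.card_pos.mp h1
            obtain ⟨heME, hve⟩ := Finset.mem_filter.mp he
            exact ⟨v, ⟨e, Finset.mem_union_left _ heME, hve⟩, Relation.ReflTransGen.refl⟩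
          · by_cases h2 : 0 < arcCoverCount MA v
            · obtain ⟨p, hp⟩ := Finset.card_pos.mp h2
              obtain ⟨hpMA, hp2⟩ := Finset.mem_filter.mp hp
              have hplt : f p.1 < f p.2 := hf p hpMA
              rw [hp2] at hplt
              obtain ⟨u, hu, hr⟩ := ihN p.1 (by omega)
              have hstep : (p.1, v) ∈ MA := by
                rw [← hp2]
                simpa using hpMA
              exact ⟨u, hu, Relation.ReflTransGen.tail hr hstep⟩
            · have hvU : v ∈ U := Finset.mem_filter.mpr ⟨Finset.mem_univ _, by omega⟩
              exact ⟨v, ⟨φ v, Finset.mem_union_right _ (Finset.mem_image.mpr ⟨v, hvU, rfl⟩),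
                (hφspec v hvU).2⟩, Relation.ReflTransGen.refl⟩
      intro v
      exact hgen (f v + 1) v (by omega)
    refine ⟨CE, MA, hCEsub, hma, hcover, ?_⟩
    have hcount := forest_count ME MA (fun e he => hE e (hme he)) hforest.2
    rw [← hU] at hcount
    have hCEcard : CE.card ≤ ME.card + U.card := by
      calc CE.card ≤ ME.card + (U.image φ).card := Finset.card_union_le _ _
      _ ≤ ME.card + U.card := by
          have := Finset.card_image_le (s := U) (f := φ)
          omega
    rw [← hsize]
    unfold mixSize
    have c1 : (CE.card : ℚ) ≤ (ME.card : ℚ) + U.card := by exact_mod_cast hCEcard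
    have c2 : 2 * (ME.card : ℚ) + MA.card + U.card = (Fintype.card V : ℚ) := by
      exact_mod_cast hcount
    linarith
  · -- there is a bad vertex: rewire
    have hUbad : 0 < (Finset.univ.filter
        (fun v => (edgeCoverCount ME v + arcCoverCount MA v = 0) ∧ ∀ e ∈ E, v ∉ e)).card := by
      omega
    obtain ⟨u, hu⟩ := Finset.card_pos.mp hUbad
    obtain ⟨-, hucov, hunoE⟩ := Finset.mem_filter.mp hu
    obtain ⟨GE, GA, hge, hga, hgc⟩ := hcov
    obtain ⟨x, ⟨e, heGE, hxe⟩, hreach⟩ := hgc u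
    have hreachA : Relation.ReflTransGen (fun a b => (a, b) ∈ A) x u :=
      Relation.ReflTransGen.mono (r := fun a b => (a, b) ∈ GA) (p := fun a b => (a, b) ∈ A)
        (fun a b hab => hga hab) x u hreach
    have hxu : x ≠ u := by
      intro h
      exact hunoE e (hge heGE) (h ▸ hxe)
    obtain ⟨m, vs, h0, hm', harc, hinj⟩ := exists_simple_path hreachA
    have hm : 1 ≤ m := by
      rcases Nat.eq_zero_or_pos m with h | h
      · subst h
        rw [h0] at hm'
        exact absurd hm' hxu
      · omega
    set S := (Finset.range m).filter (fun j => arcCoverCount MA (vs j) ≠ 1) with hS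
    rcases S.eq_empty_or_nonempty with hSe | hSne
    · -- all of vs 0 .. vs (m-1) are arc-covered: neutral rewire, bad set shrinks
      have hall : ∀ j, j < m → arcCoverCount MA (vs j) = 1 := by
        intro j hj
        by_contra h
        have : j ∈ S := Finset.mem_filter.mpr ⟨Finset.mem_range.mpr hj, h⟩
        rw [hSe] at this
        exact absurd this (Finset.notMem_empty j)
      obtain ⟨MA', hMA'A, hforest', hcard', hiff'⟩ := rewire E A hE hA ME MA hme hma hforest
        m hm vs (fun i hi => harc i hi) hinj (fun i h1 h2 => hall i h2)
        (by rw [hm']; omega) (by rw [hm']; omega)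
      have hc0 : arcCoverCount MA (vs 0) = 1 := hall 0 (by omega)
      rw [hc0] at hcard'
      have hsize' : mixSize ME MA' = ν := by
        rw [← hsize]
        unfold mixSize
        have : (MA'.card : ℚ) = MA.card := by exact_mod_cast (by omega : MA'.card = MA.card)
        rw [this]
      have hbadset' : Finset.univ.filter (fun v => (edgeCoverCount ME v + arcCoverCount MA' v = 0) ∧
          ∀ e ∈ E, v ∉ e) = (Finset.univ.filter
            (fun v => (edgeCoverCount ME v + arcCoverCount MA v = 0) ∧ ∀ e ∈ E, v ∉ e)).erase u := by
        ext v
        simp only [Finset.mem_filter, Finset.mem_erase, Finset.mem_univ, true_and]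
        constructor
        · rintro ⟨hcv, hnoE⟩
          rcases (hiff' v).mp hcv with ⟨rfl, -⟩ | ⟨hcv2, hne⟩
          · exact absurd (h0 ▸ hxe) (hnoE e (hge heGE))
          · exact ⟨fun h => hne (by rw [h, hm']), hcv2, hnoE⟩
        · rintro ⟨hne, hcv, hnoE⟩
          refine ⟨(hiff' v).mpr (Or.inr ⟨hcv, fun h => hne (by rw [h, hm'])⟩), hnoE⟩
      have hbadcard' : (Finset.univ.filter (fun v => (edgeCoverCount ME v + arcCoverCount MA' v = 0) ∧
          ∀ e ∈ E, v ∉ e)).card = k - 1 := by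
        rw [hbadset', Finset.card_erase_of_mem hu, hbad]
      exact ih (k - 1) (by omega) ME MA' hme hMA'A hforest' hsize' hbadcard'
    · -- a suffix gives an augmenting rewire: contradiction with maximality
      exfalso
      have hSmax := S.max'_mem hSne
      set j₀ := S.max' hSne with hj₀
      obtain ⟨hj₀r, hj₀c⟩ := Finset.mem_filter.mp hSmax
      rw [Finset.mem_range] at hj₀r
      have hmaxprop : ∀ j, j₀ < j → j < m → arcCoverCount MA (vs j) = 1 := by
        intro j h1 h2
        by_contra h
        have hjS : j ∈ S := Finset.mem_filter.mpr ⟨Finset.mem_range.mpr h2, h⟩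
        have := S.le_max' j hjS
        omega
      set m' := m - j₀ with hm'd
      set vs' : ℕ → V := fun i => vs (j₀ + i) with hvs'
      have hm'1 : 1 ≤ m' := by omega
      have harc' : ∀ i, i < m' → (vs' i, vs' (i + 1)) ∈ A := by
        intro i hi
        have h1 : j₀ + (i + 1) = (j₀ + i) + 1 := by omega
        simp only [hvs']
        rw [h1]
        exact harc (j₀ + i) (by omega)
      have hinj' : ∀ i, i ≤ m' → ∀ j, j ≤ m' → vs' i = vs' j → i = j := by
        intro i hi j hj h
        have := hinj (j₀ + i) (by omega) (j₀ + j) (by omega) h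
        omega
      have hint' : ∀ i, 1 ≤ i → i < m' → arcCoverCount MA (vs' i) = 1 := by
        intro i h1 h2
        exact hmaxprop (j₀ + i) (by omega) (by omega)
      have hum : vs' m' = vs m := by
        simp only [hvs']
        congr 1
        omega
      obtain ⟨MA'', hMA''A, hforest'', hcard'', -⟩ := rewire E A hE hA ME MA hme hma hforest
        m' hm'1 vs' harc' hinj' hint'
        (by rw [hum, hm']; omega) (by rw [hum, hm']; omega)
      have hc0' : arcCoverCount MA (vs' 0) = 0 := by
        have h1 : vs' 0 = vs j₀ := by simp [hvs']
        have h2 := hforest.2 (vs j₀)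
        rw [h1]
        omega
      rw [hc0'] at hcard''
      have hsz : mixSize ME MA'' = ν + 1 / 2 := by
        rw [← hsize]
        unfold mixSize
        have : (MA''.card : ℚ) = MA.card + 1 := by exact_mod_cast (by omega : MA''.card = MA.card + 1)
        rw [this]
        ring
      have := hmax ME MA'' hme hMA''A hforest''
      rw [hsz] at this
      linarith

end Hard

theorem gallai_for_mixed_graphs
    (E : Finset (Sym2 V)) (A : Finset (V × V))
    (hE : ∀ e ∈ E, ¬ e.IsDiag) (hA : ∀ a ∈ A, a.1 ≠ a.2)
    (hcov : ∃ FE FA, FE ⊆ E ∧ FA ⊆ A ∧ IsMixedEdgeCover FE FA) :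
    ∃ ν ρ : ℚ,
      IsGreatest {q : ℚ | ∃ FE FA, FE ⊆ E ∧ FA ⊆ A ∧ IsMatchingForest FE FA ∧
        q = mixSize FE FA} ν ∧
      IsLeast {q : ℚ | ∃ FE FA, FE ⊆ E ∧ FA ⊆ A ∧ IsMixedEdgeCover FE FA ∧
        q = mixSize FE FA} ρ ∧
      ν + ρ = (Fintype.card V : ℚ) := by
  classical
  set Sm : Set ℚ := {q : ℚ | ∃ FE FA, FE ⊆ E ∧ FA ⊆ A ∧ IsMatchingForest FE FA ∧
    q = mixSize FE FA} with hSm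
  set Sc : Set ℚ := {q : ℚ | ∃ FE FA, FE ⊆ E ∧ FA ⊆ A ∧ IsMixedEdgeCover FE FA ∧
    q = mixSize FE FA} with hSc
  have hSmfin : Sm.Finite := by
    apply Set.Finite.subset
      (Set.finite_range (fun p : Finset (Sym2 V) × Finset (V × V) => mixSize p.1 p.2))
    rintro q ⟨FE, FA, -, -, -, rfl⟩
    exact ⟨(FE, FA), rfl⟩
  have hScfin : Sc.Finite := by
    apply Set.Finite.subset
      (Set.finite_range (fun p : Finset (Sym2 V) × Finset (V × V) => mixSize p.1 p.2))
    rintro q ⟨FE, FA, -, -, -, rfl⟩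
    exact ⟨(FE, FA), rfl⟩
  have hforest0 : IsMatchingForest (∅ : Finset (Sym2 V)) (∅ : Finset (V × V)) := by
    constructor
    · intro S hS hne
      exfalso
      apply hne
      have h0 : underlyingEdges (∅ : Finset (Sym2 V)) (∅ : Finset (V × V)) = 0 := by
        simp [underlyingEdges]
      rw [h0] at hS
      exact Multiset.le_zero.mp hS
    · intro v; simp [edgeCoverCount, arcCoverCount]
  have hSmne : Sm.Nonempty :=
    ⟨mixSize ∅ ∅, ∅, ∅, Finset.empty_subset _, Finset.empty_subset _, hforest0, rfl⟩
  have hScne : Sc.Nonempty := by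
    obtain ⟨FE, FA, h1, h2, h3⟩ := hcov
    exact ⟨mixSize FE FA, FE, FA, h1, h2, h3, rfl⟩
  have hSmfne : hSmfin.toFinset.Nonempty := by
    obtain ⟨q, hq⟩ := hSmne
    exact ⟨q, hSmfin.mem_toFinset.mpr hq⟩
  have hScfne : hScfin.toFinset.Nonempty := by
    obtain ⟨q, hq⟩ := hScne
    exact ⟨q, hScfin.mem_toFinset.mpr hq⟩
  set ν := hSmfin.toFinset.max' hSmfne with hν
  set ρ := hScfin.toFinset.min' hScfne with hρ
  have hgreat : IsGreatest Sm ν :=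
    ⟨hSmfin.mem_toFinset.mp (Finset.max'_mem _ _),
     fun b hb => Finset.le_max' _ b (hSmfin.mem_toFinset.mpr hb)⟩
  have hleast : IsLeast Sc ρ :=
    ⟨hScfin.mem_toFinset.mp (Finset.min'_mem _ _),
     fun b hb => Finset.min'_le _ b (hScfin.mem_toFinset.mpr hb)⟩
  have hmax : ∀ FE FA, FE ⊆ E → FA ⊆ A → IsMatchingForest FE FA → mixSize FE FA ≤ ν :=
    fun FE FA h1 h2 h3 => hgreat.2 ⟨FE, FA, h1, h2, h3, rfl⟩
  obtain ⟨ME, MA, hme, hma, hforest, hνeq⟩ := hgreat.1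
  obtain ⟨CE, CA, hce, hca, hcc, hCbound⟩ := hard_direction E A hE hA hcov ν hmax
    ((Finset.univ.filter (fun v => (edgeCoverCount ME v + arcCoverCount MA v = 0) ∧
      ∀ e ∈ E, v ∉ e)).card) ME MA hme hma hforest hνeq.symm rfl
  have hρle : ρ ≤ mixSize CE CA := hleast.2 ⟨CE, CA, hce, hca, hcc, rfl⟩
  obtain ⟨CE₀, CA₀, h1, h2, h3, hρeq⟩ := hleast.1
  obtain ⟨FE, FA, h4, h5, h6, hsoft⟩ := soft_direction E A hE CE₀ CA₀ h1 h2 h3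
  have h7 : mixSize FE FA ≤ ν := hmax FE FA h4 h5 h6
  have h8 : (Fintype.card V : ℚ) ≤ ν + ρ := by rw [hρeq]; linarith
  exact ⟨ν, ρ, hgreat, hleast, by linarith⟩
end

section
/- In a mixed graph admitting a mixed edge cover, there exists a maximum mix-size matching forest F* such that every vertex not covered by F* is incident to some edge of E. -/
variable {V : Type*} [Fintype V] [DecidableEq V]

/-! ### Auxiliary machinery -/

namespace MFAux

/-- Adjacency via some edge of the multiset `M`. -/
def adjE (M : Multiset (Sym2 V)) (a b : V) : Prop := ∃ e ∈ M, a ∈ e ∧ b ∈ e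

/-- Undirected reachability in the multiset `M`. -/
def GReach (M : Multiset (Sym2 V)) : V → V → Prop := Relation.ReflTransGen (adjE M)

/-- The set of vertices touched by `S`. -/
def touchF (S : Multiset (Sym2 V)) : Finset V :=
  Finset.univ.filter (fun v : V => ∃ e ∈ S.toFinset, v ∈ e)

lemma acy_def {M : Multiset (Sym2 V)} :
    AcyclicEdgeMultiset M ↔ ∀ S : Multiset (Sym2 V), S ≤ M → S ≠ 0 →
      Multiset.card S < (touchF S).card := Iff.rfl

lemma mem_touchF {S : Multiset (Sym2 V)} {v : V} :
    v ∈ touchF S ↔ ∃ e ∈ S, v ∈ e := by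
  simp [touchF, Multiset.mem_toFinset]

lemma sym2_eq_of_mem {a b : V} {e : Sym2 V} (hab : a ≠ b) (ha : a ∈ e) (hb : b ∈ e) :
    e = s(a, b) := by
  induction e using Sym2.ind with
  | _ x y =>
    rw [Sym2.mem_iff] at ha hb
    rcases ha with rfl | rfl <;> rcases hb with rfl | rfl
    · exact absurd rfl hab
    · rfl
    · exact Sym2.eq_swap
    · exact absurd rfl hab

lemma acy_mono {M S : Multiset (Sym2 V)} (h : AcyclicEdgeMultiset M) (hS : S ≤ M) :
    AcyclicEdgeMultiset S := fun T hT => h T (le_trans hT hS)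

lemma acy_count_le_one {M : Multiset (Sym2 V)} (h : AcyclicEdgeMultiset M) (e : Sym2 V) :
    M.count e ≤ 1 := by
  by_contra hc
  push_neg at hc
  have hS : (e ::ₘ e ::ₘ 0) ≤ M := by
    rw [Multiset.le_iff_count]
    intro f
    by_cases hf : f = e
    · subst hf; simp only [Multiset.count_cons_self, Multiset.count_zero]; omega
    · simp [Multiset.count_cons, hf]
  have hlt := acy_def.1 h _ hS (by simp)
  induction e using Sym2.ind with
  | _ a b =>
    have hsub : touchF (s(a, b) ::ₘ s(a, b) ::ₘ 0) ⊆ {a, b} := by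
      intro v hv
      rw [mem_touchF] at hv
      obtain ⟨f, hf, hvf⟩ := hv
      have : f = s(a, b) := by
        rcases Multiset.mem_cons.1 hf with h' | h'
        · exact h'
        · simpa using h'
      subst this
      rcases Sym2.mem_iff.1 hvf with rfl | rfl <;> simp
    have h1 := Finset.card_le_card hsub
    have h2 : ({a, b} : Finset V).card ≤ 2 :=
      le_trans (Finset.card_insert_le _ _) (by simp)
    simp only [Multiset.card_cons, Multiset.card_zero] at hlt
    omega

/-- Adding an edge between two vertices in different components preserves acyclicity. -/
lemma acy_cons {M : Multiset (Sym2 V)} {a b : V} (hM : AcyclicEdgeMultiset M) (hab : a ≠ b)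
    (hnr : ¬ GReach M a b) : AcyclicEdgeMultiset (s(a, b) ::ₘ M) := by
  classical
  rw [acy_def]
  intro S hS hS0
  have heM : s(a, b) ∉ M := fun h =>
    hnr (Relation.ReflTransGen.single ⟨s(a, b), h, by simp, by simp⟩)
  by_cases hc : s(a, b) ∈ S
  · set S' := S.erase s(a, b) with hS'def
    have hSeq : S = s(a, b) ::ₘ S' := (Multiset.cons_erase hc).symm
    have hS'le : S' ≤ M := by
      rw [Multiset.le_iff_count]
      intro f
      by_cases hf : f = s(a, b)
      · subst hf
        have h1 := (Multiset.le_iff_count.1 hS) s(a, b)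
        rw [Multiset.count_cons_self] at h1
        rw [hS'def, Multiset.count_erase_self]
        have h2 : M.count s(a, b) = 0 := Multiset.count_eq_zero_of_notMem heM
        omega
      · have h1 := (Multiset.le_iff_count.1 hS) f
        rw [Multiset.count_cons_of_ne hf] at h1
        rwa [hS'def, Multiset.count_erase_of_ne hf]
    set P : Sym2 V → Prop := fun f => ∃ x ∈ f, GReach M a x with hP
    set S₁ := S'.filter P with hS₁
    set S₂ := S'.filter (fun f => ¬ P f) with hS₂
    have hsplit : S₁ + S₂ = S' := Multiset.filter_add_not P S'
    have key₁ : ∀ v ∈ touchF S₁, GReach M a v := by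
      intro v hv
      rw [mem_touchF] at hv
      obtain ⟨f, hf, hvf⟩ := hv
      have hfS' : f ∈ S' := Multiset.mem_of_mem_filter hf
      obtain ⟨x, hxf, hax⟩ := Multiset.of_mem_filter hf
      have hfM : f ∈ M := Multiset.mem_of_le hS'le hfS'
      exact hax.trans (Relation.ReflTransGen.single ⟨f, hfM, hxf, hvf⟩)
    have key₂ : ∀ v ∈ touchF S₂, ¬ GReach M a v := by
      intro v hv hreach
      rw [mem_touchF] at hv
      obtain ⟨f, hf, hvf⟩ := hv
      exact (Multiset.of_mem_filter hf) ⟨v, hvf, hreach⟩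
    have hdis : Disjoint (insert a (touchF S₁)) (insert b (touchF S₂)) := by
      rw [Finset.disjoint_left]
      intro x hx hx'
      have hxr : GReach M a x := by
        rcases Finset.mem_insert.1 hx with rfl | hx2
        · exact Relation.ReflTransGen.refl
        · exact key₁ x hx2
      rcases Finset.mem_insert.1 hx' with rfl | hx2'
      · exact hnr hxr
      · exact key₂ x hx2' hxr
    have hc1 : Multiset.card S₁ + 1 ≤ (insert a (touchF S₁)).card := by
      rcases eq_or_ne S₁ 0 with h0 | h0
      · have h2 : 1 ≤ (insert a (touchF S₁)).card :=
          Finset.card_pos.2 ⟨a, Finset.mem_insert_self _ _⟩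
        rw [h0]
        simpa using h2
      · have hlt := acy_def.1 hM S₁ (le_trans (Multiset.filter_le _ _) hS'le) h0
        have h2 : (touchF S₁).card ≤ (insert a (touchF S₁)).card :=
          Finset.card_le_card (Finset.subset_insert _ _)
        omega
    have hc2 : Multiset.card S₂ + 1 ≤ (insert b (touchF S₂)).card := by
      rcases eq_or_ne S₂ 0 with h0 | h0
      · have h2 : 1 ≤ (insert b (touchF S₂)).card :=
          Finset.card_pos.2 ⟨b, Finset.mem_insert_self _ _⟩
        rw [h0]
        simpa using h2
      · have hlt := acy_def.1 hM S₂ (le_trans (Multiset.filter_le _ _) hS'le) h0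
        have h2 : (touchF S₂).card ≤ (insert b (touchF S₂)).card :=
          Finset.card_le_card (Finset.subset_insert _ _)
        omega
    have hmemS' : ∀ f ∈ S', f ∈ S := fun f hf =>
      Multiset.mem_of_le (Multiset.erase_le _ _) hf
    have hsubset : insert a (touchF S₁) ∪ insert b (touchF S₂) ⊆ touchF S := by
      intro x hx
      rw [mem_touchF]
      rcases Finset.mem_union.1 hx with hx | hx
      · rcases Finset.mem_insert.1 hx with rfl | hx2
        · exact ⟨_, hc, by simp⟩
        · rw [mem_touchF] at hx2
          obtain ⟨f, hf, hxf⟩ := hx2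
          exact ⟨f, hmemS' f (Multiset.mem_of_mem_filter hf), hxf⟩
      · rcases Finset.mem_insert.1 hx with rfl | hx2
        · exact ⟨_, hc, by simp⟩
        · rw [mem_touchF] at hx2
          obtain ⟨f, hf, hxf⟩ := hx2
          exact ⟨f, hmemS' f (Multiset.mem_of_mem_filter hf), hxf⟩
    have hcard : (insert a (touchF S₁)).card + (insert b (touchF S₂)).card
        ≤ (touchF S).card := by
      rw [← Finset.card_union_of_disjoint hdis]
      exact Finset.card_le_card hsubset
    have hcards : Multiset.card S = Multiset.card S₁ + Multiset.card S₂ + 1 := by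
      rw [hSeq, Multiset.card_cons]
      have := congrArg Multiset.card hsplit
      rw [Multiset.card_add] at this
      omega
    omega
  · have hle : S ≤ M := by
      rw [Multiset.le_iff_count]
      intro f
      by_cases hf : f = s(a, b)
      · subst hf; simp [Multiset.count_eq_zero_of_notMem hc]
      · have h1 := (Multiset.le_iff_count.1 hS) f
        rwa [Multiset.count_cons_of_ne hf] at h1
    exact acy_def.1 hM S hle hS0

/-- The simple graph associated to an edge multiset. -/
def graphOf (M : Multiset (Sym2 V)) : SimpleGraph V where
  Adj a b := a ≠ b ∧ adjE M a b
  symm := by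
    constructor; rintro a b ⟨h1, e, he, ha, hb⟩
    exact ⟨h1.symm, e, he, hb, ha⟩
  loopless := by constructor; rintro a ⟨h1, -⟩; exact h1 rfl

lemma graphOf_adj {M : Multiset (Sym2 V)} {a b : V} :
    (graphOf M).Adj a b ↔ a ≠ b ∧ adjE M a b := Iff.rfl

lemma walk_edge_mem {M : Multiset (Sym2 V)} {a b : V} (p : (graphOf M).Walk a b) :
    ∀ f ∈ p.edges, f ∈ M := by
  intro f hf
  have hedge := p.edges_subset_edgeSet hf
  induction f using Sym2.ind with
  | _ x y =>
    rw [SimpleGraph.mem_edgeSet, graphOf_adj] at hedge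
    obtain ⟨hxy, e, heM, hxe, hye⟩ := hedge
    rwa [← sym2_eq_of_mem hxy hxe hye]

lemma greach_of_walk {M M' : Multiset (Sym2 V)} {a b : V} (p : (graphOf M).Walk a b)
    (h : ∀ f ∈ p.edges, f ∈ M') : GReach M' a b := by
  induction p with
  | nil => exact Relation.ReflTransGen.refl
  | @cons u x w h' p ih =>
    have h1 : s(u, x) ∈ M' := h _ (by simp [SimpleGraph.Walk.edges_cons])
    refine Relation.ReflTransGen.head ⟨s(u, x), h1, by simp, by simp⟩ (ih ?_)
    intro f hf
    exact h f (by simp [SimpleGraph.Walk.edges_cons, hf])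

lemma reachable_of_greach {M : Multiset (Sym2 V)} {a b : V} (h : GReach M a b) :
    (graphOf M).Reachable a b := by
  induction h with
  | refl => exact SimpleGraph.Reachable.refl a
  | @tail x y h1 h2 ih =>
    by_cases hxy : x = y
    · subst hxy; exact ih
    · exact ih.trans (SimpleGraph.Adj.reachable ⟨hxy, h2⟩)

lemma greach_symm {M : Multiset (Sym2 V)} {a b : V} (h : GReach M a b) : GReach M b a := by
  induction h with
  | refl => exact Relation.ReflTransGen.refl
  | @tail x y h1 h2 ih =>
    obtain ⟨e, he, hx, hy⟩ := h2
    exact Relation.ReflTransGen.head ⟨e, he, hy, hx⟩ ih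

lemma mem_support_of_mem_edge {G : SimpleGraph V} {a b x : V} (p : G.Walk a b)
    {f : Sym2 V} (hf : f ∈ p.edges) (hx : x ∈ f) : x ∈ p.support := by
  induction f using Sym2.ind with
  | _ u w =>
    rcases Sym2.mem_iff.1 hx with rfl | rfl
    · exact p.fst_mem_support_of_mem_edges hf
    · exact p.snd_mem_support_of_mem_edges hf

/-- Deleting an edge of an acyclic multiset disconnects its endpoints. -/
lemma not_greach_erase {M : Multiset (Sym2 V)} (hM : AcyclicEdgeMultiset M) {q w : V}
    (hqw : q ≠ w) (he : s(q, w) ∈ M) : ¬ GReach (M.erase s(q, w)) q w := by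
  intro hcon
  classical
  obtain ⟨R0⟩ := reachable_of_greach hcon
  set R := R0.toPath with hRdef
  have hRpath : R.1.IsPath := R.2
  have h1 : M.count s(q, w) = 1 :=
    le_antisymm (acy_count_le_one hM _) (Multiset.one_le_count_iff_mem.2 he)
  have heE : s(q, w) ∉ M.erase s(q, w) := by
    intro hmem'
    have := Multiset.count_pos.2 hmem'
    rw [Multiset.count_erase_self, h1] at this
    omega
  have hmem : ∀ f ∈ R.1.edges, f ∈ M.erase s(q, w) := walk_edge_mem R.1
  have hnotin : s(q, w) ∉ R.1.edges := fun h => heE (hmem _ h)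
  set S : Multiset (Sym2 V) := s(q, w) ::ₘ (R.1.edges : Multiset (Sym2 V)) with hSdef
  have hSle : S ≤ M := by
    rw [Multiset.le_iff_count]
    intro f
    by_cases hf : f = s(q, w)
    · subst hf
      have h2 : Multiset.count s(q, w) (R.1.edges : Multiset (Sym2 V)) = 0 :=
        Multiset.count_eq_zero.2 (by simpa using hnotin)
      rw [hSdef, Multiset.count_cons_self, h2, h1]
    · rw [hSdef, Multiset.count_cons_of_ne hf]
      by_cases hfR : f ∈ R.1.edges
      · have hfM : f ∈ M := Multiset.mem_of_mem_erase (hmem f hfR)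
        have h2 : Multiset.count f (R.1.edges : Multiset (Sym2 V)) ≤ 1 := by
          rw [Multiset.coe_count]
          exact List.nodup_iff_count_le_one.1 hRpath.isTrail.edges_nodup f
        have h3 : 1 ≤ Multiset.count f M := Multiset.one_le_count_iff_mem.2 hfM
        omega
      · have : Multiset.count f (R.1.edges : Multiset (Sym2 V)) = 0 :=
          Multiset.count_eq_zero.2 (by simpa using hfR)
        simp [this]
  have hS0 : S ≠ 0 := by simp [hSdef]
  have hlt := acy_def.1 hM S hSle hS0
  have hup : touchF S ⊆ R.1.support.toFinset := by
    intro x hx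
    rw [mem_touchF] at hx
    obtain ⟨f, hf, hxf⟩ := hx
    rw [List.mem_toFinset]
    rcases Multiset.mem_cons.1 hf with rfl | hf2
    · rcases Sym2.mem_iff.1 hxf with rfl | rfl
      · exact R.1.start_mem_support
      · exact R.1.end_mem_support
    · exact mem_support_of_mem_edge R.1 (by simpa using hf2) hxf
  have hcardsup : R.1.support.toFinset.card = R.1.length + 1 := by
    rw [List.toFinset_card_of_nodup hRpath.support_nodup, SimpleGraph.Walk.length_support]
  have hcardS : Multiset.card S = R.1.length + 1 := by
    rw [hSdef, Multiset.card_cons]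
    simp [SimpleGraph.Walk.length_edges]
  have := Finset.card_le_card hup
  omega

/-! ### Cover count helpers -/

lemma edgeCover_pos {FE : Finset (Sym2 V)} {x : V} {e : Sym2 V} (he : e ∈ FE) (hx : x ∈ e) :
    1 ≤ edgeCoverCount FE x :=
  Finset.card_pos.2 ⟨e, Finset.mem_filter.2 ⟨he, hx⟩⟩

lemma edgeCover_exists {FE : Finset (Sym2 V)} {x : V} (h : edgeCoverCount FE x ≠ 0) :
    ∃ e ∈ FE, x ∈ e := by
  obtain ⟨e, he⟩ := Finset.card_pos.1 (Nat.pos_of_ne_zero h)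
  exact ⟨e, (Finset.mem_filter.1 he).1, (Finset.mem_filter.1 he).2⟩

lemma arcCover_pos {FA : Finset (V × V)} {a : V × V} {x : V} (ha : a ∈ FA) (h2 : a.2 = x) :
    1 ≤ arcCoverCount FA x :=
  Finset.card_pos.2 ⟨a, Finset.mem_filter.2 ⟨ha, h2⟩⟩

lemma arcCover_two {FA : Finset (V × V)} {p q : V × V} {x : V} (hp : p ∈ FA) (hq : q ∈ FA)
    (hne : p ≠ q) (hp2 : p.2 = x) (hq2 : q.2 = x) : 2 ≤ arcCoverCount FA x := by
  have h2 : 1 < (FA.filter (fun a => a.2 = x)).card :=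
    Finset.one_lt_card.2 ⟨p, Finset.mem_filter.2 ⟨hp, hp2⟩, q,
      Finset.mem_filter.2 ⟨hq, hq2⟩, hne⟩
  unfold arcCoverCount
  omega

lemma arcCoverCount_insert {FA : Finset (V × V)} {p : V × V} (hp : p ∉ FA) (y : V) :
    arcCoverCount (insert p FA) y = arcCoverCount FA y + if p.2 = y then 1 else 0 := by
  unfold arcCoverCount
  rw [Finset.filter_insert]
  by_cases h : p.2 = y
  · rw [if_pos h, if_pos h,
      Finset.card_insert_of_notMem (fun hc => hp (Finset.mem_of_mem_filter _ hc))]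
  · rw [if_neg h, if_neg h, add_zero]

lemma arcCoverCount_erase {FA : Finset (V × V)} {a : V × V} (ha : a ∈ FA) (y : V) :
    arcCoverCount (FA.erase a) y = arcCoverCount FA y - (if a.2 = y then 1 else 0) := by
  unfold arcCoverCount
  rw [Finset.filter_erase]
  by_cases h : a.2 = y
  · rw [if_pos h, Finset.card_erase_of_mem (Finset.mem_filter.2 ⟨ha, h⟩)]
  · have h2 : (FA.filter (fun a => a.2 = y)).erase a = FA.filter (fun a => a.2 = y) :=
      Finset.erase_eq_of_notMem (fun hc => h (Finset.mem_filter.1 hc).2)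
    rw [if_neg h, h2, Nat.sub_zero]

lemma edge_cases {FE : Finset (Sym2 V)} {FA : Finset (V × V)} {x y : V}
    (hm : s(x, y) ∈ underlyingEdges FE FA) :
    s(x, y) ∈ FE ∨ (x, y) ∈ FA ∨ (y, x) ∈ FA := by
  rcases Multiset.mem_add.1 hm with h | h
  · exact Or.inl h
  · obtain ⟨a, ha, hae⟩ := Multiset.mem_map.1 h
    rcases Sym2.eq_iff.1 hae with ⟨h1, h2⟩ | ⟨h1, h2⟩
    · refine Or.inr (Or.inl ?_)
      have : a = (x, y) := Prod.ext h1 h2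
      rwa [← this]
    · refine Or.inr (Or.inr ?_)
      have : a = (y, x) := Prod.ext h1 h2
      rwa [← this]

lemma underlying_mem_of_arc {FE : Finset (Sym2 V)} {FA : Finset (V × V)} {a : V × V}
    (ha : a ∈ FA) : s(a.1, a.2) ∈ underlyingEdges FE FA :=
  Multiset.mem_add.2 (Or.inr (Multiset.mem_map.2 ⟨a, ha, rfl⟩))

lemma underlying_insert {FE : Finset (Sym2 V)} {FA : Finset (V × V)} {p : V × V}
    (hp : p ∉ FA) :
    underlyingEdges FE (insert p FA) = s(p.1, p.2) ::ₘ underlyingEdges FE FA := by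
  unfold underlyingEdges
  rw [Finset.insert_val_of_notMem hp, Multiset.map_cons, Multiset.add_cons]

lemma underlying_erase {FE : Finset (Sym2 V)} {FA : Finset (V × V)} {α : V × V}
    (hα : α ∈ FA) :
    underlyingEdges FE (FA.erase α) = (underlyingEdges FE FA).erase s(α.1, α.2) := by
  have h1 : FA.val = α ::ₘ FA.val.erase α := (Multiset.cons_erase hα).symm
  have h2 : underlyingEdges FE FA
      = s(α.1, α.2) ::ₘ (FE.val + (FA.val.erase α).map (fun a => s(a.1, a.2))) := by
    unfold underlyingEdges
    conv_lhs => rw [h1]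
    rw [Multiset.map_cons, Multiset.add_cons]
  rw [h2, Multiset.erase_cons_head]
  unfold underlyingEdges
  rw [Finset.erase_val]

/-! ### The forward-path lemma -/

lemma claim_forward {FE : Finset (Sym2 V)} {FA : Finset (V × V)}
    (hm : ∀ y, edgeCoverCount FE y + arcCoverCount FA y ≤ 1) :
    ∀ {y w : V} (Q : (graphOf (underlyingEdges FE FA)).Walk y w), Q.IsPath →
      ∀ inA : V, (inA, y) ∈ FA → inA ∉ Q.support →
      ∀ d ∈ Q.darts, (d.toProd.1, d.toProd.2) ∈ FA := by
  intro y w Q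
  induction Q with
  | nil => intro _ inA _ _ d hd; simp at hd
  | @cons y z w h R ih =>
    intro hQ inA hin hns d hd
    have hyz : y ≠ z := h.ne
    have hyzM : s(y, z) ∈ underlyingEdges FE FA := by
      obtain ⟨hne, e, heM, hy, hz⟩ := h
      rwa [← sym2_eq_of_mem hne hy hz]
    have hfirst : (y, z) ∈ FA := by
      rcases edge_cases hyzM with hFE | hFA | hBA
      · exfalso
        have h1 := edgeCover_pos hFE (Sym2.mem_mk_left y z)
        have h2 := arcCover_pos (x := y) hin rfl
        have := hm y; omega
      · exact hFA
      · exfalso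
        have hzin : z ∈ (SimpleGraph.Walk.cons h R).support := by
          simp [SimpleGraph.Walk.support_cons]
        have hinz : inA ≠ z := fun h' => hns (h' ▸ hzin)
        have h2 : 2 ≤ arcCoverCount FA y :=
          arcCover_two hin hBA (fun hc => hinz (congrArg Prod.fst hc)) rfl rfl
        have := hm y; omega
    rcases List.mem_cons.1 (by simpa [SimpleGraph.Walk.darts_cons] using hd) with rfl | hd'
    · simpa using hfirst
    · have hQ' : R.IsPath := hQ.of_cons
      have hyns : y ∉ R.support := ((SimpleGraph.Walk.cons_isPath_iff h R).1 hQ).2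
      exact ih hQ' y hfirst hyns d hd'

lemma claim_all {FE : Finset (Sym2 V)} {FA : Finset (V × V)}
    (hm : ∀ y, edgeCoverCount FE y + arcCoverCount FA y ≤ 1) {v w : V}
    (P : (graphOf (underlyingEdges FE FA)).Walk v w) (hP : P.IsPath)
    (hv : edgeCoverCount FE v + arcCoverCount FA v = 0) :
    ∀ d ∈ P.darts, (d.toProd.1, d.toProd.2) ∈ FA := by
  cases P with
  | nil => intro d hd; simp at hd
  | @cons _ z _ h R =>
    intro d hd
    have hyz : v ≠ z := h.ne
    have hyzM : s(v, z) ∈ underlyingEdges FE FA := by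
      obtain ⟨hne, e, heM, hy, hz⟩ := h
      rwa [← sym2_eq_of_mem hne hy hz]
    have hfirst : (v, z) ∈ FA := by
      rcases edge_cases hyzM with hFE | hFA | hBA
      · exfalso
        have h1 := edgeCover_pos hFE (Sym2.mem_mk_left v z)
        omega
      · exact hFA
      · exfalso
        have h1 := arcCover_pos (x := v) hBA rfl
        omega
    rcases List.mem_cons.1 (by simpa [SimpleGraph.Walk.darts_cons] using hd) with rfl | hd'
    · simpa using hfirst
    · have hQ' : R.IsPath := hP.of_cons
      have hyns : v ∉ R.support := ((SimpleGraph.Walk.cons_isPath_iff h R).1 hP).2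
      exact claim_forward hm R hQ' v hfirst hyns d hd'

/-- From an uncovered vertex `v`, any tree path ends in a forward arc whose deletion
disconnects `v` from the endpoint. -/
lemma path_lemma {FE : Finset (Sym2 V)} {FA : Finset (V × V)}
    (hacy : AcyclicEdgeMultiset (underlyingEdges FE FA))
    (hm : ∀ y, edgeCoverCount FE y + arcCoverCount FA y ≤ 1)
    {v w : V} (hv : edgeCoverCount FE v + arcCoverCount FA v = 0)
    (hr : GReach (underlyingEdges FE FA) v w) (hvw : v ≠ w) :
    ∃ q, (q, w) ∈ FA ∧ ¬ GReach ((underlyingEdges FE FA).erase s(q, w)) v w := by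
  classical
  obtain ⟨P0⟩ := reachable_of_greach hr
  set P := P0.toPath with hPdef
  have hP : P.1.IsPath := P.2
  have hfwd := claim_all hm P.1 hP hv
  have hPrevP : P.1.reverse.IsPath := hP.reverse
  have hnotnil : ¬ P.1.reverse.Nil := SimpleGraph.Walk.not_nil_of_ne (Ne.symm hvw)
  obtain ⟨q, hadj, Q, hPrev⟩ := SimpleGraph.Walk.not_nil_iff.1 hnotnil
  have hqFA : (q, w) ∈ FA := by
    have hd : (⟨(w, q), hadj⟩ : (graphOf (underlyingEdges FE FA)).Dart)
        ∈ P.1.reverse.darts := by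
      rw [hPrev]; simp [SimpleGraph.Walk.darts_cons]
    rw [SimpleGraph.Walk.mem_darts_reverse] at hd
    have := hfwd _ hd
    simpa [SimpleGraph.Dart.symm] using this
  refine ⟨q, hqFA, ?_⟩
  intro hcon
  have hqw : q ≠ w := hadj.ne.symm
  have heM : s(q, w) ∈ underlyingEdges FE FA := underlying_mem_of_arc hqFA
  have hnodup : P.1.reverse.edges.Nodup := hPrevP.isTrail.edges_nodup
  have hQav : ∀ f ∈ Q.edges, f ∈ (underlyingEdges FE FA).erase s(q, w) := by
    intro f hf
    have hfM : f ∈ underlyingEdges FE FA := walk_edge_mem Q f hf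
    have hfne : f ≠ s(q, w) := by
      intro hfe
      rw [hPrev, SimpleGraph.Walk.edges_cons, List.nodup_cons] at hnodup
      apply hnodup.1
      rw [Sym2.eq_swap]
      rw [← hfe]
      exact hf
    exact (Multiset.mem_erase_of_ne hfne).2 hfM
  have hqv : GReach ((underlyingEdges FE FA).erase s(q, w)) q v := greach_of_walk Q hQav
  exact not_greach_erase hacy hqw heM (hqv.trans hcon)

/-! ### Main induction -/

/-- Bad vertices: uncovered and not incident to any edge of `E`. -/
def Ubad (E : Finset (Sym2 V)) (FE : Finset (Sym2 V)) (FA : Finset (V × V)) : Finset V :=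
  Finset.univ.filter
    (fun v => edgeCoverCount FE v + arcCoverCount FA v = 0 ∧ ∀ e ∈ E, v ∉ e)

/-- Bounded-length reachability via arcs of `A`. -/
def reachN (A : Finset (V × V)) : ℕ → V → V → Prop
  | 0, u, v => u = v
  | n + 1, u, v => ∃ w, reachN A n u w ∧ (w, v) ∈ A

lemma arcReach_reachN {B A : Finset (V × V)} (hBA : B ⊆ A) {u v : V} (h : arcReach B u v) :
    ∃ n, reachN A n u v := by
  induction h with
  | refl => exact ⟨0, rfl⟩
  | @tail x y h1 h2 ih =>
    obtain ⟨n, hn⟩ := ih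
    exact ⟨n + 1, x, hn, hBA h2⟩

lemma main_bad (E : Finset (Sym2 V)) (A : Finset (V × V)) (hA : ∀ a ∈ A, a.1 ≠ a.2) :
    ∀ (n : ℕ) (FE : Finset (Sym2 V)) (FA : Finset (V × V)), FE ⊆ E → FA ⊆ A →
      IsMatchingForest FE FA →
      (∀ FE' FA', FE' ⊆ E → FA' ⊆ A → IsMatchingForest FE' FA' →
        mixSize FE' FA' ≤ mixSize FE FA) →
      (∀ FE' FA', FE' ⊆ E → FA' ⊆ A → IsMatchingForest FE' FA' →
        mixSize FE' FA' = mixSize FE FA → (Ubad E FE FA).card ≤ (Ubad E FE' FA').card) →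
      ∀ u v : V, (∃ e ∈ E, u ∈ e) → reachN A n u v → v ∈ Ubad E FE FA → False := by
  intro n
  induction n with
  | zero =>
    intro FE FA _ _ _ _ _ u v hu hr hv
    have huv : u = v := hr
    subst huv
    obtain ⟨-, -, hninc⟩ := Finset.mem_filter.1 hv
    obtain ⟨e, he, hue⟩ := hu
    exact hninc e he hue
  | succ n ih =>
    intro FE FA hFE hFA hmf Hmax Hmin u v hu hr hv
    obtain ⟨w, hrn, hwvA⟩ := hr
    have hwv : w ≠ v := hA _ hwvA
    obtain ⟨hacy, hcov⟩ := hmf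
    obtain ⟨-, hv0, hvninc⟩ := Finset.mem_filter.1 hv
    have hva : arcCoverCount FA v = 0 := by omega
    have hve : edgeCoverCount FE v = 0 := by omega
    have hwvFA : (w, v) ∉ FA := fun h => by
      have := arcCover_pos (x := v) h rfl; omega
    by_cases hre : GReach (underlyingEdges FE FA) w v
    · -- exchange case
      have hrev : GReach (underlyingEdges FE FA) v w := greach_symm hre
      obtain ⟨q, hqFA, hdisc⟩ := path_lemma hacy hcov hv0 hrev (Ne.symm hwv)
      set FA' := insert (w, v) (FA.erase (q, w)) with hFA'
      have hαw : arcCoverCount FA w = 1 := by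
        have h1 := arcCover_pos (x := w) hqFA rfl
        have := hcov w; omega
      have hwvFA' : (w, v) ∉ FA.erase (q, w) := fun h => hwvFA (Finset.mem_of_mem_erase h)
      have hcount : ∀ y, arcCoverCount FA' y =
          (arcCoverCount FA y - (if w = y then 1 else 0)) + (if v = y then 1 else 0) := by
        intro y
        rw [hFA', arcCoverCount_insert hwvFA', arcCoverCount_erase hqFA]
      have hc_v : edgeCoverCount FE v + arcCoverCount FA' v = 1 := by
        rw [hcount v, if_neg hwv, if_pos rfl]
        omega
      have hc_w : arcCoverCount FA' w = 0 := by
        rw [hcount w, if_pos rfl, if_neg (Ne.symm hwv)]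
        omega
      have hc_other : ∀ y, y ≠ v → y ≠ w → arcCoverCount FA' y = arcCoverCount FA y := by
        intro y h1 h2
        rw [hcount y, if_neg (fun hc => h2 hc.symm), if_neg (fun hc => h1 hc.symm)]
        omega
      have hmf' : IsMatchingForest FE FA' := by
        constructor
        · have hval : underlyingEdges FE FA'
              = s(w, v) ::ₘ ((underlyingEdges FE FA).erase s(q, w)) := by
            rw [hFA', underlying_insert hwvFA', underlying_erase hqFA]
          rw [hval]
          exact acy_cons (acy_mono hacy (Multiset.erase_le _ _)) hwv
            (fun hgr => hdisc (greach_symm hgr))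
        · intro y
          by_cases h1 : y = v
          · subst h1; omega
          by_cases h2 : y = w
          · rw [h2, hc_w]
            have := hcov w
            omega
          · rw [hc_other y h1 h2]
            exact hcov y
      have hFA'A : FA' ⊆ A := by
        intro p hp
        rcases Finset.mem_insert.1 hp with rfl | hp
        · exact hwvA
        · exact hFA (Finset.mem_of_mem_erase hp)
      have hcard' : FA'.card = FA.card := by
        rw [hFA', Finset.card_insert_of_notMem hwvFA', Finset.card_erase_of_mem hqFA]
        have : 0 < FA.card := Finset.card_pos.2 ⟨(q, w), hqFA⟩
        omega
      have hmix' : mixSize FE FA' = mixSize FE FA := by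
        unfold mixSize; rw [hcard']
      have hUsub : Ubad E FE FA' ⊆ insert w ((Ubad E FE FA).erase v) := by
        intro y hy
        obtain ⟨-, hy0, hyninc⟩ := Finset.mem_filter.1 hy
        by_cases hyw : y = w
        · subst hyw; exact Finset.mem_insert_self _ _
        apply Finset.mem_insert_of_mem
        have hyv : y ≠ v := by
          intro h1; subst h1; omega
        rw [Finset.mem_erase]
        refine ⟨hyv, Finset.mem_filter.2 ⟨Finset.mem_univ _, ?_, hyninc⟩⟩
        rw [← hc_other y hyv hyw]
        exact hy0
      by_cases hwinc : ∃ e ∈ E, w ∈ e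
      · have hUsub2 : Ubad E FE FA' ⊆ (Ubad E FE FA).erase v := by
          intro y hy
          rcases Finset.mem_insert.1 (hUsub hy) with rfl | hy2
          · exfalso
            obtain ⟨-, -, hyninc⟩ := Finset.mem_filter.1 hy
            obtain ⟨e, he, hwe⟩ := hwinc
            exact hyninc e he hwe
          · exact hy2
        have hlt : (Ubad E FE FA').card < (Ubad E FE FA).card :=
          lt_of_le_of_lt (Finset.card_le_card hUsub2) (Finset.card_erase_lt_of_mem hv)
        have := Hmin FE FA' hFE hFA'A hmf' hmix'
        omega
      · have hwe0 : edgeCoverCount FE w = 0 := by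
          by_contra h
          obtain ⟨e, he, hwe⟩ := edgeCover_exists h
          exact hwinc ⟨e, hFE he, hwe⟩
        have hwU' : w ∈ Ubad E FE FA' := by
          refine Finset.mem_filter.2 ⟨Finset.mem_univ _, ?_, ?_⟩
          · rw [hc_w]; omega
          · intro e he hwe'
            exact hwinc ⟨e, he, hwe'⟩
        have hUcard : (Ubad E FE FA').card = (Ubad E FE FA).card := by
          have h1 := Finset.card_le_card hUsub
          have h2 : ((Ubad E FE FA).erase v).card = (Ubad E FE FA).card - 1 :=
            Finset.card_erase_of_mem hv
          have h3 := Finset.card_insert_le w ((Ubad E FE FA).erase v)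
          have h4 := Hmin FE FA' hFE hFA'A hmf' hmix'
          have h5 : 0 < (Ubad E FE FA).card := Finset.card_pos.2 ⟨v, hv⟩
          omega
        exact ih FE FA' hFE hFA'A hmf'
          (fun FE'' FA'' a b c => (Hmax FE'' FA'' a b c).trans_eq hmix'.symm)
          (fun FE'' FA'' a b c d => by
            rw [hUcard]; exact Hmin FE'' FA'' a b c (d.trans hmix'))
          u w hu hrn hwU'
    · -- augmenting case
      set FA'' := insert (w, v) FA with hFA''
      have hmf'' : IsMatchingForest FE FA'' := by
        constructor
        · have hval : underlyingEdges FE FA'' = s(w, v) ::ₘ underlyingEdges FE FA :=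
            underlying_insert hwvFA
          rw [hval]
          exact acy_cons hacy hwv hre
        · intro y
          rw [hFA'', arcCoverCount_insert hwvFA]
          by_cases h1 : y = v
          · rw [h1]
            have hif : (if ((w, v) : V × V).2 = v then 1 else 0) = 1 := if_pos rfl
            rw [hif]
            omega
          · have := hcov y
            rw [if_neg (show ((w, v) : V × V).2 ≠ y from fun hc => h1 hc.symm)]
            omega
      have hFA''A : FA'' ⊆ A := by
        intro p hp
        rcases Finset.mem_insert.1 hp with rfl | hp
        · exact hwvA
        · exact hFA hp
      have hmix'' : mixSize FE FA'' = mixSize FE FA + 1 / 2 := by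
        unfold mixSize
        rw [hFA'', Finset.card_insert_of_notMem hwvFA]
        push_cast
        ring
      have := Hmax FE FA'' hFE hFA''A hmf''
      rw [hmix''] at this
      linarith

end MFAux

open MFAux in
theorem exists_max_matching_forest_uncovered_incident_to_edge
    (E : Finset (Sym2 V)) (A : Finset (V × V))
    (hE : ∀ e ∈ E, ¬ e.IsDiag) (hA : ∀ a ∈ A, a.1 ≠ a.2)
    (hcov : ∃ FE FA, FE ⊆ E ∧ FA ⊆ A ∧ IsMixedEdgeCover FE FA) :
    ∃ FE FA, FE ⊆ E ∧ FA ⊆ A ∧ IsMatchingForest FE FA ∧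
      (∀ FE' FA', FE' ⊆ E → FA' ⊆ A → IsMatchingForest FE' FA' →
        mixSize FE' FA' ≤ mixSize FE FA) ∧
      ∀ v : V, edgeCoverCount FE v + arcCoverCount FA v = 0 → ∃ e ∈ E, v ∈ e := by
  classical
  set T : Finset (Finset (Sym2 V) × Finset (V × V)) :=
    Finset.univ.filter (fun p => p.1 ⊆ E ∧ p.2 ⊆ A ∧ IsMatchingForest p.1 p.2) with hT
  have hTne : ((∅, ∅) : Finset (Sym2 V) × Finset (V × V)) ∈ T := by
    refine Finset.mem_filter.2 ⟨Finset.mem_univ _, Finset.empty_subset _,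
      Finset.empty_subset _, ?_, ?_⟩
    · intro S hS hS0
      exfalso
      apply hS0
      have : underlyingEdges (∅ : Finset (Sym2 V)) (∅ : Finset (V × V)) = 0 := by
        simp [underlyingEdges]
      rw [this] at hS
      exact Multiset.le_zero.1 hS
    · intro y
      simp [edgeCoverCount, arcCoverCount]
  set N := Fintype.card V with hN
  set φ : Finset (Sym2 V) × Finset (V × V) → ℕ :=
    fun p => (2 * p.1.card + p.2.card) * (N + 1) + (N - (Ubad E p.1 p.2).card) with hφ
  obtain ⟨F, hFT, hFmax⟩ := T.exists_max_image φ ⟨_, hTne⟩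
  obtain ⟨-, hFE, hFA, hmf⟩ := Finset.mem_filter.1 hFT
  have hub : ∀ (FE' : Finset (Sym2 V)) (FA' : Finset (V × V)),
      (Ubad E FE' FA').card ≤ N := by
    intro FE' FA'
    exact le_trans (Finset.card_le_univ _) (le_of_eq rfl)
  have hmixnat : ∀ (p q : Finset (Sym2 V) × Finset (V × V)),
      mixSize p.1 p.2 ≤ mixSize q.1 q.2 ↔
        2 * p.1.card + p.2.card ≤ 2 * q.1.card + q.2.card := by
    intro p q
    unfold mixSize
    constructor
    · intro h
      have h2 : ((2 * p.1.card + p.2.card : ℕ) : ℚ)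
          ≤ ((2 * q.1.card + q.2.card : ℕ) : ℚ) := by
        push_cast
        linarith
      exact_mod_cast h2
    · intro h
      have h2 : ((2 * p.1.card + p.2.card : ℕ) : ℚ)
          ≤ ((2 * q.1.card + q.2.card : ℕ) : ℚ) := by exact_mod_cast h
      push_cast at h2
      linarith
  have Hmax : ∀ FE' FA', FE' ⊆ E → FA' ⊆ A → IsMatchingForest FE' FA' →
      mixSize FE' FA' ≤ mixSize F.1 F.2 := by
    intro FE' FA' h1 h2 h3
    have hmem : ((FE', FA') : Finset (Sym2 V) × Finset (V × V)) ∈ T :=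
      Finset.mem_filter.2 ⟨Finset.mem_univ _, h1, h2, h3⟩
    have hφle := hFmax _ hmem
    rw [hmixnat (FE', FA') F]
    show 2 * FE'.card + FA'.card ≤ 2 * F.1.card + F.2.card
    by_contra hlt
    push_neg at hlt
    have hstep : (2 * F.1.card + F.2.card + 1) * (N + 1)
        ≤ (2 * FE'.card + FA'.card) * (N + 1) :=
      Nat.mul_le_mul_right _ (by omega)
    have hexp : (2 * F.1.card + F.2.card + 1) * (N + 1)
        = (2 * F.1.card + F.2.card) * (N + 1) + (N + 1) := by ring
    have hu1 := hub F.1 F.2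
    have hu2 := hub FE' FA'
    simp only [hφ] at hφle
    have hφle' : (2 * FE'.card + FA'.card) * (N + 1) + (N - (Ubad E FE' FA').card)
        ≤ (2 * F.1.card + F.2.card) * (N + 1) + (N - (Ubad E F.1 F.2).card) := hφle
    omega
  have Hmin : ∀ FE' FA', FE' ⊆ E → FA' ⊆ A → IsMatchingForest FE' FA' →
      mixSize FE' FA' = mixSize F.1 F.2 →
      (Ubad E F.1 F.2).card ≤ (Ubad E FE' FA').card := by
    intro FE' FA' h1 h2 h3 h4
    have hmem : ((FE', FA') : Finset (Sym2 V) × Finset (V × V)) ∈ T :=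
      Finset.mem_filter.2 ⟨Finset.mem_univ _, h1, h2, h3⟩
    have hφle := hFmax _ hmem
    have heq : 2 * FE'.card + FA'.card = 2 * F.1.card + F.2.card :=
      le_antisymm ((hmixnat (FE', FA') F).1 h4.le) ((hmixnat F (FE', FA')).1 h4.ge)
    have hu1 := hub F.1 F.2
    have hu2 := hub FE' FA'
    simp only [hφ] at hφle
    have hφle' : (2 * FE'.card + FA'.card) * (N + 1) + (N - (Ubad E FE' FA').card)
        ≤ (2 * F.1.card + F.2.card) * (N + 1) + (N - (Ubad E F.1 F.2).card) := hφle
    rw [heq] at hφle'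
    omega
  refine ⟨F.1, F.2, hFE, hFA, hmf, Hmax, ?_⟩
  intro v hv0
  by_contra hninc
  push_neg at hninc
  have hvU : v ∈ Ubad E F.1 F.2 :=
    Finset.mem_filter.2 ⟨Finset.mem_univ _, hv0, hninc⟩
  obtain ⟨CE, CA, hCE, hCA, hcover⟩ := hcov
  obtain ⟨u, ⟨e, heCE, hue⟩, hreach⟩ := hcover v
  obtain ⟨n, hn⟩ := arcReach_reachN hCA hreach
  exact main_bad E A hA n F.1 F.2 hFE hFA hmf Hmax Hmin u v ⟨e, hCE heCE, hue⟩ hn hvU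
end
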